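/- arXiv:1209.2045 — 2 statements merged into one kernel-verified Lean document; each statement's English description precedes it below -/
import Mathlib

section
/- Let a>0 and let γ₀,γ₁ ≥ 0 with γ₁ ≤ 2/a and γ₀ − γ₁ ≤ 2. Let h be the unique smooth function on ℂ∖{0} with Δh = 4(e^{ah} − 1), h → 0 at ∞ and h(z)/log|z| → γ₀+γ₁ at 0. Then any smooth solution (u,v) on ℂ∖{0} of the system Δu = 4(e^{au} − e^{v−u}), Δv = 4(e^{v−u} − e^{−av}) with asymptotic data (γ₀,γ₁) satisfies h(z) ≤ u(z) + v(z) ≤ 0 for all z ∈ ℂ∖{0}. -/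
open Filter

/-- The Euclidean Laplacian of `f : ℂ → ℝ`, viewing `ℂ ≅ ℝ²` with orthonormal
directions `1` and `I`. -/
noncomputable def lap (f : ℂ → ℝ) (z : ℂ) : ℝ :=
  iteratedFDeriv ℝ 2 f z ![1, 1] + iteratedFDeriv ℝ 2 f z ![Complex.I, Complex.I]

/-- `f` is smooth on `ℂ ∖ {0}`. -/
def SmoothOffZero (f : ℂ → ℝ) : Prop := ContDiffOn ℝ (⊤ : ℕ∞) f {(0 : ℂ)}ᶜ

/-- `f z → 0` as `|z| → ∞`. -/
def TendstoZeroAtInfty (f : ℂ → ℝ) : Prop :=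
  Tendsto f (comap (fun z : ℂ => ‖z‖) atTop) (nhds 0)

/-- `f z / log |z| → γ` as `z → 0`. -/
def LogAsymAtZero (γ : ℝ) (f : ℂ → ℝ) : Prop :=
  Tendsto (fun z : ℂ => f z / Real.log ‖z‖) (nhdsWithin 0 {(0 : ℂ)}ᶜ) (nhds γ)

/-- `(u, v)` is a smooth solution on `ℂ ∖ {0}` of the two-function tt*-Toda system
`Δu = 4(e^{au} − e^{v−u})`, `Δv = 4(e^{v−u} − e^{−bv})`. -/
def IsTodaSol (a b : ℝ) (u v : ℂ → ℝ) : Prop :=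
  SmoothOffZero u ∧ SmoothOffZero v ∧
  ∀ z : ℂ, z ≠ 0 →
    lap u z = 4 * (Real.exp (a * u z) - Real.exp (v z - u z)) ∧
    lap v z = 4 * (Real.exp (v z - u z) - Real.exp (-(b * v z)))

/-- `(u, v)` has asymptotic data `(γ, δ)`: `u, v → 0` at `∞` and
`u(z)/log|z| → γ`, `v(z)/log|z| → δ` at `0`. -/
def HasAsymData (γ δ : ℝ) (u v : ℂ → ℝ) : Prop :=
  TendstoZeroAtInfty u ∧ TendstoZeroAtInfty v ∧ LogAsymAtZero γ u ∧ LogAsymAtZero δ v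

/-- `h` is a smooth solution on `ℂ ∖ {0}` of the scalar comparison equation
`Δh = 4(e^{ah} − 1)` with `h → 0` at `∞` and `h(z)/log|z| → c` at `0`. -/
def IsLiouvilleSol (a c : ℝ) (h : ℂ → ℝ) : Prop :=
  SmoothOffZero h ∧
  (∀ z : ℂ, z ≠ 0 → lap h z = 4 * (Real.exp (a * h z) - 1)) ∧
  TendstoZeroAtInfty h ∧ LogAsymAtZero c h



open Topology

section AuxToda

/-- 1D second derivative test: at a local max, the second derivative is ≤ 0. -/
lemma second_deriv_test {g G : ℝ → ℝ} {c : ℝ}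
    (hg : ∀ᶠ t in 𝓝 (0:ℝ), HasDerivAt g (G t) t)
    (hG : HasDerivAt G c 0) (hmax : IsLocalMax g 0) : c ≤ 0 := by
  by_contra hc
  push_neg at hc
  have hG0 : G 0 = 0 := by
    have h1 : deriv g 0 = G 0 := hg.self_of_nhds.deriv
    have h2 := hmax.deriv_eq_zero
    linarith
  have hslope : ∀ᶠ t in 𝓝[≠] (0:ℝ), 0 < G t / t := by
    have h3 := hasDerivAt_iff_tendsto_slope.mp hG
    have h4 : ∀ᶠ t in 𝓝[≠] (0:ℝ), c / 2 < slope G 0 t :=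
      h3.eventually (eventually_gt_nhds (by linarith))
    filter_upwards [h4] with t ht
    have hs : slope G 0 t = G t / t := by
      rw [slope_def_field, hG0, sub_zero, sub_zero]
    rw [hs] at ht
    linarith
  have hslope' : ∀ᶠ t in 𝓝 (0:ℝ), t ∈ ({(0:ℝ)}ᶜ : Set ℝ) → 0 < G t / t :=
    eventually_nhdsWithin_iff.mp hslope
  have hmain : ∀ᶠ t in 𝓝 (0:ℝ),
      (HasDerivAt g (G t) t ∧ g t ≤ g 0) ∧ (t ∈ ({(0:ℝ)}ᶜ : Set ℝ) → 0 < G t / t) :=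
    (hg.and hmax).and hslope'
  rw [Metric.eventually_nhds_iff] at hmain
  obtain ⟨e, he, hmain⟩ := hmain
  have ht₁e : e / 2 < e := by linarith
  have ht₁pos : (0:ℝ) < e / 2 := by linarith
  have hmono : StrictMonoOn g (Set.Icc 0 (e/2)) := by
    apply strictMonoOn_of_deriv_pos (convex_Icc _ _)
    · intro x hx
      have hx' : dist x 0 < e := by
        rw [Real.dist_eq, sub_zero, abs_of_nonneg hx.1]; linarith [hx.2]
      exact ((hmain hx').1.1).continuousAt.continuousWithinAt
    · intro x hx
      rw [interior_Icc] at hx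
      have hx' : dist x 0 < e := by
        rw [Real.dist_eq, sub_zero, abs_of_nonneg hx.1.le]; linarith [hx.2]
      have hd := (hmain hx').1.1
      rw [hd.deriv]
      have hpos := (hmain hx').2 (by simpa using (ne_of_gt hx.1))
      have hmul := mul_pos hpos hx.1
      rwa [div_mul_cancel₀ _ (ne_of_gt hx.1)] at hmul
  have h01 : (0:ℝ) ∈ Set.Icc 0 (e/2) := ⟨le_refl _, le_of_lt ht₁pos⟩
  have ht1 : e/2 ∈ Set.Icc 0 (e/2) := ⟨le_of_lt ht₁pos, le_refl _⟩
  have hlt := hmono h01 ht1 ht₁pos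
  have hle : g (e/2) ≤ g 0 := by
    have : dist (e/2) 0 < e := by
      rw [Real.dist_eq, sub_zero, abs_of_nonneg (le_of_lt ht₁pos)]; linarith
    exact (hmain this).1.2
  linarith

/-- Derivatives of a smooth function along a line, related to `iteratedFDeriv`. -/
lemma line_smooth_spec {F : ℂ → ℝ} {U : Set ℂ} (hU : IsOpen U) (hF : ContDiffOn ℝ (⊤:ℕ∞) F U)
    {z : ℂ} (hz : z ∈ U) (w : ℂ) :
    (∀ᶠ t in 𝓝 (0:ℝ), HasDerivAt (fun s : ℝ => F (z + s • w)) (fderiv ℝ F (z + t • w) w) t)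
    ∧ HasDerivAt (fun t : ℝ => fderiv ℝ F (z + t • w) w) (iteratedFDeriv ℝ 2 F z ![w, w]) 0 := by
  have hline : ∀ t : ℝ, HasDerivAt (fun s : ℝ => z + s • w) w t := by
    intro t
    simpa using ((hasDerivAt_id t).smul_const w).const_add z
  have hcont : Continuous (fun t : ℝ => z + t • w) := by continuity
  have hz0 : z + (0:ℝ) • w = z := by simp
  have hS : (fun t : ℝ => z + t • w) ⁻¹' U ∈ 𝓝 (0:ℝ) := by
    apply hcont.continuousAt.preimage_mem_nhds
    rw [hz0]; exact hU.mem_nhds hz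
  have hdiff : ∀ ζ ∈ U, DifferentiableAt ℝ F ζ := fun ζ hζ =>
    (hF.contDiffAt (hU.mem_nhds hζ)).differentiableAt (by simp)
  constructor
  · filter_upwards [hS] with t ht
    exact (hdiff _ ht).hasFDerivAt.comp_hasDerivAt t (hline t)
  · have hF' : ContDiffOn ℝ (⊤:ℕ∞) (fderiv ℝ F) U :=
      hF.fderiv_of_isOpen hU (le_of_eq rfl)
    have hd2 : DifferentiableAt ℝ (fderiv ℝ F) z :=
      (hF'.contDiffAt (hU.mem_nhds hz)).differentiableAt (by simp)
    have h3 : HasDerivAt (fun t : ℝ => fderiv ℝ F (z + t • w)) (fderiv ℝ (fderiv ℝ F) z w) 0 := by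
      have hd2' : HasFDerivAt (fderiv ℝ F) (fderiv ℝ (fderiv ℝ F) z) (z + (0:ℝ) • w) := by
        rw [hz0]; exact hd2.hasFDerivAt
      exact hd2'.comp_hasDerivAt 0 (hline 0)
    have h4 := h3.clm_apply (hasDerivAt_const (0:ℝ) w)
    rw [iteratedFDeriv_two_apply]
    simpa using h4

lemma log_abs_eq (ζ : ℂ) : Real.log (‖ζ‖) = Real.log (ζ.re^2 + ζ.im^2) / 2 := by
  rw [Complex.norm_def, Real.log_sqrt (Complex.normSq_nonneg ζ)]
  congr 2
  rw [Complex.normSq_apply]; ring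

/-- Derivatives of the barrier `ε (C − log((x+t)² + y²)/2)` along a line. -/
lemma psi_line_spec (x y C ε : ℝ) (hq : x^2 + y^2 ≠ 0) :
    (∀ᶠ t in 𝓝 (0:ℝ), HasDerivAt (fun s : ℝ => ε * (C - Real.log ((x+s)^2 + y^2) / 2))
       (-(ε * ((x+t)/((x+t)^2+y^2)))) t)
    ∧ HasDerivAt (fun t : ℝ => -(ε * ((x+t)/((x+t)^2+y^2))))
       (-(ε * ((y^2 - x^2)/(x^2+y^2)^2))) 0 := by
  have hqc : Continuous (fun t : ℝ => (x+t)^2 + y^2) := by continuity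
  have hinner : ∀ t : ℝ, HasDerivAt (fun s : ℝ => (x+s)^2 + y^2) (2*(x+t)) t := by
    intro t
    have h1 : HasDerivAt (fun s : ℝ => x + s) 1 t := (hasDerivAt_id t).const_add x
    have h2 := (h1.pow 2).add_const (y^2)
    simpa using h2
  constructor
  · have hev : ∀ᶠ t in 𝓝 (0:ℝ), (x+t)^2 + y^2 ≠ 0 := by
      have h0 : (x+(0:ℝ))^2 + y^2 ≠ 0 := by simpa using hq
      exact hqc.continuousAt.eventually_ne h0
    filter_upwards [hev] with t ht
    have hlog := ((hinner t).log ht).div_const 2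
    have := (hlog.const_sub C).const_mul ε
    refine this.congr_deriv ?_
    ring
  · have h1 : HasDerivAt (fun t : ℝ => x + t) 1 0 := (hasDerivAt_id 0).const_add x
    have hq0 : (x+(0:ℝ))^2 + y^2 ≠ 0 := by simpa using hq
    have hdiv := h1.div (hinner 0) hq0
    have := (hdiv.const_mul ε).neg
    refine this.congr_deriv ?_
    ring

lemma iterated_line_add {F G : ℂ → ℝ} {U : Set ℂ} (hU : IsOpen U)
    (hF : ContDiffOn ℝ (⊤:ℕ∞) F U) (hG : ContDiffOn ℝ (⊤:ℕ∞) G U)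
    {z : ℂ} (hz : z ∈ U) (w : ℂ) :
    iteratedFDeriv ℝ 2 (fun ζ => F ζ + G ζ) z ![w,w]
      = iteratedFDeriv ℝ 2 F z ![w,w] + iteratedFDeriv ℝ 2 G z ![w,w] := by
  obtain ⟨fi, fii⟩ := line_smooth_spec hU hF hz w
  obtain ⟨gi, gii⟩ := line_smooth_spec hU hG hz w
  obtain ⟨si, sii⟩ := line_smooth_spec hU (hF.add hG) hz w
  have hcont : Continuous (fun t : ℝ => z + t • w) := by continuity
  have hS : (fun t : ℝ => z + t • w) ⁻¹' U ∈ 𝓝 (0:ℝ) := by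
    apply hcont.continuousAt.preimage_mem_nhds
    simpa using hU.mem_nhds hz
  have heq : (fun t : ℝ => fderiv ℝ F (z + t • w) w + fderiv ℝ G (z + t • w) w)
      =ᶠ[𝓝 (0:ℝ)] (fun t : ℝ => fderiv ℝ (fun ζ => F ζ + G ζ) (z + t • w) w) := by
    filter_upwards [hS] with t ht
    have hdF : DifferentiableAt ℝ F (z + t • w) :=
      (hF.contDiffAt (hU.mem_nhds ht)).differentiableAt (by simp)
    have hdG : DifferentiableAt ℝ G (z + t • w) :=
      (hG.contDiffAt (hU.mem_nhds ht)).differentiableAt (by simp)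
    rw [fderiv_fun_add hdF hdG]
    simp
  have h1 : HasDerivAt (fun t : ℝ => fderiv ℝ F (z + t • w) w + fderiv ℝ G (z + t • w) w)
      (iteratedFDeriv ℝ 2 (fun ζ => F ζ + G ζ) z ![w,w]) 0 :=
    sii.congr_of_eventuallyEq heq
  exact h1.unique (fii.add gii)

lemma iterated_line_sub {F G : ℂ → ℝ} {U : Set ℂ} (hU : IsOpen U)
    (hF : ContDiffOn ℝ (⊤:ℕ∞) F U) (hG : ContDiffOn ℝ (⊤:ℕ∞) G U)
    {z : ℂ} (hz : z ∈ U) (w : ℂ) :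
    iteratedFDeriv ℝ 2 (fun ζ => F ζ - G ζ) z ![w,w]
      = iteratedFDeriv ℝ 2 F z ![w,w] - iteratedFDeriv ℝ 2 G z ![w,w] := by
  obtain ⟨fi, fii⟩ := line_smooth_spec hU hF hz w
  obtain ⟨gi, gii⟩ := line_smooth_spec hU hG hz w
  obtain ⟨si, sii⟩ := line_smooth_spec hU (hF.sub hG) hz w
  have hcont : Continuous (fun t : ℝ => z + t • w) := by continuity
  have hS : (fun t : ℝ => z + t • w) ⁻¹' U ∈ 𝓝 (0:ℝ) := by
    apply hcont.continuousAt.preimage_mem_nhds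
    simpa using hU.mem_nhds hz
  have heq : (fun t : ℝ => fderiv ℝ F (z + t • w) w - fderiv ℝ G (z + t • w) w)
      =ᶠ[𝓝 (0:ℝ)] (fun t : ℝ => fderiv ℝ (fun ζ => F ζ - G ζ) (z + t • w) w) := by
    filter_upwards [hS] with t ht
    have hdF : DifferentiableAt ℝ F (z + t • w) :=
      (hF.contDiffAt (hU.mem_nhds ht)).differentiableAt (by simp)
    have hdG : DifferentiableAt ℝ G (z + t • w) :=
      (hG.contDiffAt (hU.mem_nhds ht)).differentiableAt (by simp)
    rw [fderiv_fun_sub hdF hdG]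
    simp
  have h1 : HasDerivAt (fun t : ℝ => fderiv ℝ F (z + t • w) w - fderiv ℝ G (z + t • w) w)
      (iteratedFDeriv ℝ 2 (fun ζ => F ζ - G ζ) z ![w,w]) 0 :=
    sii.congr_of_eventuallyEq heq
  exact h1.unique (fii.sub gii)

lemma lap_add {F G : ℂ → ℝ} {U : Set ℂ} (hU : IsOpen U)
    (hF : ContDiffOn ℝ (⊤:ℕ∞) F U) (hG : ContDiffOn ℝ (⊤:ℕ∞) G U)
    {z : ℂ} (hz : z ∈ U) :
    lap (fun ζ => F ζ + G ζ) z = lap F z + lap G z := by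
  simp only [lap, iterated_line_add hU hF hG hz]
  ring

lemma lap_sub {F G : ℂ → ℝ} {U : Set ℂ} (hU : IsOpen U)
    (hF : ContDiffOn ℝ (⊤:ℕ∞) F U) (hG : ContDiffOn ℝ (⊤:ℕ∞) G U)
    {z : ℂ} (hz : z ∈ U) :
    lap (fun ζ => F ζ - G ζ) z = lap F z - lap G z := by
  simp only [lap, iterated_line_sub hU hF hG hz]
  ring

/-- Maximum principle with log barrier on the punctured plane. -/
lemma max_principle {f : ℂ → ℝ} (hf : SmoothOffZero f) {γ : ℝ} (hγ : 0 ≤ γ)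
    (hinf : TendstoZeroAtInfty f) (hlog : LogAsymAtZero γ f)
    (hpos : ∀ z : ℂ, z ≠ 0 → 0 < f z → 0 < lap f z) :
    ∀ z : ℂ, z ≠ 0 → f z ≤ 0 := by
  intro z₀ hz₀
  have habs0 : 0 < ‖z₀‖ := norm_pos_iff.mpr hz₀
  have key : ∀ η : ℝ, 0 < η → f z₀ ≤ η := by
    intro η hη
    set δ : ℝ := η/2 with hδdef
    have hδpos : 0 < δ := by simp only [hδdef]; linarith
    -- outer radius
    have h1 : f ⁻¹' (Set.Iio δ) ∈ comap (fun z : ℂ => ‖z‖) atTop :=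
      hinf (Iio_mem_nhds hδpos)
    rw [mem_comap] at h1
    obtain ⟨S, hS, hsub⟩ := h1
    rw [mem_atTop_sets] at hS
    obtain ⟨R₀, hR₀⟩ := hS
    have houter : ∀ ζ : ℂ, R₀ ≤ ‖ζ‖ → f ζ < δ := fun ζ hζ => hsub (hR₀ _ hζ)
    set R : ℝ := max R₀ (max (‖z₀‖ + 1) 1) with hRdef
    have hRz₀ : ‖z₀‖ < R := by
      have : ‖z₀‖ + 1 ≤ R := le_trans (le_max_left _ _) (le_max_right _ _)
      linarith
    have hR1 : (1:ℝ) ≤ R := le_trans (le_max_right _ _) (le_max_right _ _)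
    have hRpos : 0 < R := lt_of_lt_of_le one_pos hR1
    have hRR₀ : R₀ ≤ R := le_max_left _ _
    have hlogRz : 0 < Real.log (R / ‖z₀‖) := Real.log_pos ((one_lt_div habs0).mpr hRz₀)
    set ε : ℝ := δ / (Real.log (R / ‖z₀‖) + 1) with hεdef
    have hεpos : 0 < ε := by
      apply div_pos hδpos; linarith
    have hεlog : ε * Real.log (R / ‖z₀‖) ≤ δ := by
      rw [hεdef, div_mul_eq_mul_div, div_le_iff₀ (by linarith)]
      nlinarith
    -- inner radius
    have h2 : ∀ᶠ ζ in 𝓝[{(0:ℂ)}ᶜ] 0, -ε < f ζ / Real.log (‖ζ‖) :=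
      hlog.eventually (eventually_gt_nhds (by linarith))
    rw [Filter.eventually_iff, Metric.mem_nhdsWithin_iff] at h2
    obtain ⟨r₀, hr₀pos, hball⟩ := h2
    set r : ℝ := min (min (r₀/2) (‖z₀‖ / 2)) (1/2) with hrdef
    have hrpos : 0 < r := by
      apply lt_min (lt_min (by linarith) (by linarith)) (by norm_num)
    have hrr₀ : r < r₀ := lt_of_le_of_lt (le_trans (min_le_left _ _) (min_le_left _ _)) (by linarith)
    have hrz₀ : r < ‖z₀‖ :=
      lt_of_le_of_lt (le_trans (min_le_left _ _) (min_le_right _ _)) (by linarith)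
    have hr1 : r < 1 := lt_of_le_of_lt (min_le_right _ _) (by norm_num)
    have hinner : ∀ ζ : ℂ, ζ ≠ 0 → ‖ζ‖ ≤ r →
        f ζ ≤ ε * (Real.log R - Real.log (‖ζ‖)) := by
      intro ζ hζ hζr
      have hζball : ζ ∈ Metric.ball (0:ℂ) r₀ := by
        rw [Metric.mem_ball, Complex.dist_eq, sub_zero]; linarith
      have hslope : -ε < f ζ / Real.log (‖ζ‖) := hball ⟨hζball, hζ⟩
      have habs : 0 < ‖ζ‖ := norm_pos_iff.mpr hζ
      have hlogneg : Real.log (‖ζ‖) < 0 := Real.log_neg habs (by linarith)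
      have hfval : f ζ = (f ζ / Real.log (‖ζ‖)) * Real.log (‖ζ‖) :=
        (div_mul_cancel₀ _ (ne_of_lt hlogneg)).symm
      have hmul : (f ζ / Real.log (‖ζ‖)) * Real.log (‖ζ‖)
          < (-ε) * Real.log (‖ζ‖) := mul_lt_mul_of_neg_right hslope hlogneg
      have hlogRnn : 0 ≤ Real.log R := Real.log_nonneg hR1
      nlinarith [mul_nonneg hεpos.le hlogRnn]
    -- the compact annulus and the barrier comparison
    set K : Set ℂ := Metric.closedBall (0:ℂ) R \ Metric.ball (0:ℂ) r with hKdef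
    have hmemK : ∀ ζ : ℂ, ζ ∈ K ↔ ‖ζ‖ ≤ R ∧ r ≤ ‖ζ‖ := by
      intro ζ
      simp [hKdef, Metric.mem_closedBall, Metric.mem_ball, Complex.dist_eq, not_lt]
    have hKne : ∀ ζ ∈ K, ζ ≠ 0 := by
      intro ζ hζ h0
      rw [hmemK] at hζ
      rw [h0] at hζ
      simp at hζ
      linarith [hζ.2]
    have hcompact : IsCompact K := (isCompact_closedBall _ _).diff Metric.isOpen_ball
    set ψ : ℂ → ℝ := fun ζ => ε * (Real.log R - Real.log (‖ζ‖)) with hψdef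
    set s : ℂ → ℝ := fun ζ => f ζ - ψ ζ - δ with hsdef
    have hconts : ContinuousOn s K := by
      apply ContinuousOn.sub _ continuousOn_const
      apply ContinuousOn.sub
      · apply hf.continuousOn.mono
        intro ζ hζ
        simpa using hKne ζ hζ
      · apply continuousOn_const.mul
        apply ContinuousOn.sub continuousOn_const
        intro ζ hζ
        exact ((Real.continuousAt_log (norm_ne_zero_iff.mpr (hKne ζ hζ))).comp
          continuous_norm.continuousAt).continuousWithinAt
    have hz₀K : z₀ ∈ K := by
      rw [hmemK]; exact ⟨le_of_lt hRz₀, le_of_lt hrz₀⟩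
    obtain ⟨z₁, hz₁K, hz₁max⟩ := hcompact.exists_isMaxOn ⟨z₀, hz₀K⟩ hconts
    obtain ⟨hz₁R, hz₁r⟩ := (hmemK z₁).mp hz₁K
    have hz₁ne : z₁ ≠ 0 := hKne z₁ hz₁K
    have habs₁ : 0 < ‖z₁‖ := norm_pos_iff.mpr hz₁ne
    have hmax0 : s z₁ ≤ 0 := by
      rcases eq_or_lt_of_le hz₁R with hRe | hRlt
      · -- outer boundary
        have hf₁ : f z₁ < δ := houter z₁ (by rw [hRe]; exact hRR₀)
        have hψ₁ : ψ z₁ = 0 := by rw [hψdef]; simp [hRe]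
        simp only [hsdef, hψ₁]
        linarith
      rcases eq_or_lt_of_le hz₁r with hre | hrlt
      · -- inner boundary
        have hf₁ : f z₁ ≤ ε * (Real.log R - Real.log (‖z₁‖)) :=
          hinner z₁ hz₁ne (le_of_eq hre.symm)
        simp only [hsdef, hψdef]
        linarith
      · -- interior: maximum principle
        by_contra hspos
        push_neg at hspos
        have hψ₁nn : 0 ≤ Real.log R - Real.log (‖z₁‖) := by
          have := Real.log_le_log habs₁ hz₁R
          linarith
        have hf₁pos : 0 < f z₁ := by
          have hs₁ : s z₁ = f z₁ - ε * (Real.log R - Real.log (‖z₁‖)) - δ := rfl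
          nlinarith [mul_nonneg hεpos.le hψ₁nn]
        have hlappos := hpos z₁ hz₁ne hf₁pos
        have hopen : IsOpen {ζ : ℂ | r < ‖ζ‖ ∧ ‖ζ‖ < R} :=
          IsOpen.inter (isOpen_lt continuous_const continuous_norm)
            (isOpen_lt continuous_norm continuous_const)
        have hKnhds : K ∈ 𝓝 z₁ := by
          apply mem_of_superset (hopen.mem_nhds ⟨hrlt, hRlt⟩)
        
          intro ζ hζ
          rw [hmemK]
          exact ⟨le_of_lt hζ.2, le_of_lt hζ.1⟩
        have hlm : IsLocalMax s z₁ := hz₁max.isLocalMax hKnhds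
        have hz₁mem : z₁ ∈ ({(0:ℂ)}ᶜ : Set ℂ) := by simpa using hz₁ne
        have hnormsq : (0:ℝ) < z₁.re^2 + z₁.im^2 := by
          have := Complex.normSq_pos.mpr hz₁ne
          rwa [Complex.normSq_apply, show z₁.re*z₁.re = z₁.re^2 by ring,
            show z₁.im*z₁.im = z₁.im^2 by ring] at this
        -- direction 1
        obtain ⟨f1i, f1ii⟩ := line_smooth_spec isOpen_compl_singleton hf hz₁mem 1
        obtain ⟨p1i, p1ii⟩ := psi_line_spec z₁.re z₁.im (Real.log R) ε (ne_of_gt hnormsq)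
        have hline1 : (fun t : ℝ => s (z₁ + t • (1:ℂ)))
            = (fun t : ℝ => f (z₁ + t • (1:ℂ))
                - (ε * (Real.log R - Real.log ((z₁.re + t)^2 + z₁.im^2) / 2)) - δ) := by
          funext t
          have hre : (z₁ + t • (1:ℂ)).re = z₁.re + t := by
            simp [Complex.add_re, Complex.smul_re]
          have him : (z₁ + t • (1:ℂ)).im = z₁.im := by
            simp [Complex.add_im, Complex.smul_im]
          simp only [hsdef, hψdef]
          rw [log_abs_eq, hre, him]
        have hlm1 : IsLocalMax (fun t : ℝ => f (z₁ + t • (1:ℂ))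
            - (ε * (Real.log R - Real.log ((z₁.re + t)^2 + z₁.im^2) / 2)) - δ) 0 := by
          rw [← hline1]
          have hL0 : z₁ + (0:ℝ) • (1:ℂ) = z₁ := by simp
          have hc : ContinuousAt (fun t : ℝ => z₁ + t • (1:ℂ)) 0 := by fun_prop
          have ht : Tendsto (fun t : ℝ => z₁ + t • (1:ℂ)) (𝓝 0) (𝓝 z₁) := by
            have := hc.tendsto; rwa [hL0] at this
          have hev := ht.eventually hlm
          show ∀ᶠ t in 𝓝 (0:ℝ), s (z₁ + t • (1:ℂ)) ≤ s (z₁ + (0:ℝ) • (1:ℂ))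
          rw [hL0]
          exact hev
        have hg1 : ∀ᶠ t in 𝓝 (0:ℝ), HasDerivAt
            (fun t : ℝ => f (z₁ + t • (1:ℂ))
              - (ε * (Real.log R - Real.log ((z₁.re + t)^2 + z₁.im^2) / 2)) - δ)
            (fderiv ℝ f (z₁ + t • (1:ℂ)) 1
              - (-(ε * ((z₁.re+t)/((z₁.re+t)^2+z₁.im^2))))) t := by
          filter_upwards [f1i, p1i] with t h1 h2
          exact (h1.sub h2).sub_const δ
        have hG1 : HasDerivAt (fun t : ℝ => fderiv ℝ f (z₁ + t • (1:ℂ)) 1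
              - (-(ε * ((z₁.re+t)/((z₁.re+t)^2+z₁.im^2)))))
            (iteratedFDeriv ℝ 2 f z₁ ![1,1]
              - (-(ε * ((z₁.im^2 - z₁.re^2)/(z₁.re^2+z₁.im^2)^2)))) 0 := f1ii.sub p1ii
        have hc1 := second_deriv_test hg1 hG1 hlm1
        -- direction I
        obtain ⟨fIi, fIii⟩ := line_smooth_spec isOpen_compl_singleton hf hz₁mem Complex.I
        obtain ⟨pIi, pIii⟩ := psi_line_spec z₁.im z₁.re (Real.log R) ε
          (ne_of_gt (by linarith : (0:ℝ) < z₁.im^2 + z₁.re^2))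
        have hlineI : (fun t : ℝ => s (z₁ + t • Complex.I))
            = (fun t : ℝ => f (z₁ + t • Complex.I)
                - (ε * (Real.log R - Real.log ((z₁.im + t)^2 + z₁.re^2) / 2)) - δ) := by
          funext t
          have hre : (z₁ + t • Complex.I).re = z₁.re := by
            simp [Complex.add_re, Complex.smul_re]
          have him : (z₁ + t • Complex.I).im = z₁.im + t := by
            simp [Complex.add_im, Complex.smul_im]
          simp only [hsdef, hψdef]
          rw [log_abs_eq, hre, him, add_comm (z₁.re^2)]
        have hlmI : IsLocalMax (fun t : ℝ => f (z₁ + t • Complex.I)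
            - (ε * (Real.log R - Real.log ((z₁.im + t)^2 + z₁.re^2) / 2)) - δ) 0 := by
          rw [← hlineI]
          have hL0 : z₁ + (0:ℝ) • Complex.I = z₁ := by simp
          have hc : ContinuousAt (fun t : ℝ => z₁ + t • Complex.I) 0 := by fun_prop
          have ht : Tendsto (fun t : ℝ => z₁ + t • Complex.I) (𝓝 0) (𝓝 z₁) := by
            have := hc.tendsto; rwa [hL0] at this
          have hev := ht.eventually hlm
          show ∀ᶠ t in 𝓝 (0:ℝ), s (z₁ + t • Complex.I) ≤ s (z₁ + (0:ℝ) • Complex.I)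
          rw [hL0]
          exact hev
        have hgI : ∀ᶠ t in 𝓝 (0:ℝ), HasDerivAt
            (fun t : ℝ => f (z₁ + t • Complex.I)
              - (ε * (Real.log R - Real.log ((z₁.im + t)^2 + z₁.re^2) / 2)) - δ)
            (fderiv ℝ f (z₁ + t • Complex.I) Complex.I
              - (-(ε * ((z₁.im+t)/((z₁.im+t)^2+z₁.re^2))))) t := by
          filter_upwards [fIi, pIi] with t h1 h2
          exact (h1.sub h2).sub_const δ
        have hGI : HasDerivAt (fun t : ℝ => fderiv ℝ f (z₁ + t • Complex.I) Complex.I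
              - (-(ε * ((z₁.im+t)/((z₁.im+t)^2+z₁.re^2)))))
            (iteratedFDeriv ℝ 2 f z₁ ![Complex.I,Complex.I]
              - (-(ε * ((z₁.re^2 - z₁.im^2)/(z₁.im^2+z₁.re^2)^2)))) 0 := fIii.sub pIii
        have hcI := second_deriv_test hgI hGI hlmI
        have hlapval : lap f z₁ = iteratedFDeriv ℝ 2 f z₁ ![1,1]
            + iteratedFDeriv ℝ 2 f z₁ ![Complex.I,Complex.I] := rfl
        have hzero : (-(ε * ((z₁.im^2 - z₁.re^2)/(z₁.re^2+z₁.im^2)^2)))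
            + (-(ε * ((z₁.re^2 - z₁.im^2)/(z₁.im^2+z₁.re^2)^2))) = 0 := by ring
        linarith
    -- conclude
    have hsz₀ : s z₀ ≤ 0 := le_trans (hz₁max hz₀K) hmax0
    have hψz₀ : ψ z₀ = ε * Real.log (R / ‖z₀‖) := by
      rw [hψdef]
      simp only []
      rw [Real.log_div (ne_of_gt hRpos) (ne_of_gt habs0)]
    have hs₀ : s z₀ = f z₀ - ψ z₀ - δ := rfl
    rw [hψz₀] at hs₀
    rw [hs₀] at hsz₀
    have : f z₀ ≤ ε * Real.log (R / ‖z₀‖) + δ := by linarith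
    have hδη : δ + δ = η := by rw [hδdef]; ring
    linarith
  by_contra hpos0
  push_neg at hpos0
  have := key (f z₀ / 2) (by linarith)
  linarith

end AuxToda

/-- Comparison bound: `h ≤ u + v ≤ 0` for any solution `(u, v)` with
asymptotic data `(γ₀, γ₁)`, where `h` solves `Δh = 4(e^{ah} − 1)` with data `γ₀ + γ₁`. -/
theorem toda_sum_bounds (a γ₀ γ₁ : ℝ) (ha : 0 < a)
    (h0 : 0 ≤ γ₀) (h1 : 0 ≤ γ₁) (h2 : γ₁ ≤ 2 / a) (h3 : γ₀ - γ₁ ≤ 2)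
    (h : ℂ → ℝ) (hh : IsLiouvilleSol a (γ₀ + γ₁) h)
    (u v : ℂ → ℝ) (hsol : IsTodaSol a a u v) (hasym : HasAsymData γ₀ γ₁ u v) :
    ∀ z : ℂ, z ≠ 0 → h z ≤ u z + v z ∧ u z + v z ≤ 0 := by
  obtain ⟨hhsm, hheq, hhinf, hhlog⟩ := hh
  obtain ⟨husm, hvsm, heqs⟩ := hsol
  obtain ⟨huinf, hvinf, hulog, hvlog⟩ := hasym
  have hUopen : IsOpen ({(0:ℂ)}ᶜ : Set ℂ) := isOpen_compl_singleton
  -- the sum w = u + v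
  have hWsm : SmoothOffZero (fun z => u z + v z) := husm.add hvsm
  have hWinf : TendstoZeroAtInfty (fun z => u z + v z) := by
    have := huinf.add hvinf; simp only [add_zero] at this; exact this
  have hWlog : LogAsymAtZero (γ₀+γ₁) (fun z => u z + v z) := by
    have h' := hulog.add hvlog
    exact Tendsto.congr (fun z => (add_div _ _ _).symm) h'
  have hWlap : ∀ z : ℂ, z ≠ 0 → lap (fun z => u z + v z) z
      = 4*(Real.exp (a * u z) - Real.exp (-(a * v z))) := by
    intro z hz
    have hmem : z ∈ ({(0:ℂ)}ᶜ : Set ℂ) := hz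
    rw [lap_add hUopen husm hvsm hmem, (heqs z hz).1, (heqs z hz).2]
    ring
  -- Step 1 : u + v ≤ 0
  have hWle : ∀ z : ℂ, z ≠ 0 → u z + v z ≤ 0 := by
    apply max_principle hWsm (by linarith : (0:ℝ) ≤ γ₀ + γ₁) hWinf hWlog
    intro z hz hW
    rw [hWlap z hz]
    have hlt : -(a * v z) < a * u z := by nlinarith
    have := Real.exp_lt_exp.mpr hlt
    linarith
  -- Step 2 : u ≤ 0
  have hule : ∀ z : ℂ, z ≠ 0 → u z ≤ 0 := by
    apply max_principle husm h0 huinf hulog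
    intro z hz hu
    rw [(heqs z hz).1]
    have hlt : v z - u z < a * u z := by nlinarith [hWle z hz]
    have := Real.exp_lt_exp.mpr hlt
    linarith
  -- Step 3 : v ≤ 0
  have hvle : ∀ z : ℂ, z ≠ 0 → v z ≤ 0 := by
    apply max_principle hvsm h1 hvinf hvlog
    intro z hz hv
    rw [(heqs z hz).2]
    have hlt : -(a * v z) < v z - u z := by nlinarith [hule z hz]
    have := Real.exp_lt_exp.mpr hlt
    linarith
  -- Step 4 : h ≤ u + v
  have hdsm : SmoothOffZero (fun z => h z - (u z + v z)) := hhsm.sub (husm.add hvsm)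
  have hdinf : TendstoZeroAtInfty (fun z => h z - (u z + v z)) := by
    have := hhinf.sub hWinf; simp only [sub_zero] at this; exact this
  have hdlog : LogAsymAtZero 0 (fun z => h z - (u z + v z)) := by
    have h' := hhlog.sub hWlog
    rw [sub_self] at h'
    exact Tendsto.congr (fun z => (sub_div _ _ _).symm) h'
  have hdle : ∀ z : ℂ, z ≠ 0 → h z - (u z + v z) ≤ 0 := by
    apply max_principle hdsm (le_refl (0:ℝ)) hdinf hdlog
    intro z hz hd
    have hmem : z ∈ ({(0:ℂ)}ᶜ : Set ℂ) := hz
    rw [lap_sub hUopen hhsm hWsm hmem, hWlap z hz, hheq z hz]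
    have hw : u z + v z ≤ 0 := hWle z hz
    have hv0 : v z ≤ 0 := hvle z hz
    have hwh : u z + v z < h z := by linarith
    have e1 : Real.exp (a * u z) = Real.exp (-(a * v z)) * Real.exp (a*(u z + v z)) := by
      rw [← Real.exp_add]; congr 1; ring
    have e2 : Real.exp (a*(u z + v z)) ≤ 1 := Real.exp_le_one_iff.mpr (by nlinarith)
    have e3 : 1 ≤ Real.exp (-(a * v z)) := Real.one_le_exp_iff.mpr (by nlinarith)
    have e4 : Real.exp (a*(u z + v z)) < Real.exp (a * h z) :=
      Real.exp_lt_exp.mpr (by nlinarith)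
    nlinarith [mul_nonneg (by linarith : (0:ℝ) ≤ Real.exp (-(a * v z)) - 1)
      (by linarith : (0:ℝ) ≤ 1 - Real.exp (a*(u z + v z)))]
  intro z hz
  exact ⟨by linarith [hdle z hz], hWle z hz⟩
end

section
/- Let a>0 and let γ₀ ∈ (0,2), γ₁ ∈ (−2,0) with γ₀ − γ₁ < 2. Let (u,v) be any smooth solution on ℂ∖{0} of the system Δu = 4(e^{au} − e^{v−u}), Δv = 4(e^{v−u} − e^{−av}) with asymptotic data (γ₀,γ₁). Choose γ₁* ∈ (−2,γ₁) and let (u*,v*) be the unique solution with asymptotic data (0,γ₁*); choose γ̄₀ ∈ (γ₀,2) and let (ū,v̄) be the unique solution with asymptotic data (γ̄₀,0). Then ū < 0 < u* and v̄ < 0 < v*, and ū ≤ u ≤ u* and v̄ ≤ v ≤ v* on ℂ∖{0}. -/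
open Filter

set_option maxHeartbeats 1000000

section Core

private lemma hasDerivAt_line (f : ℂ → ℝ) (z d : ℂ) (t : ℝ)
    (hf : DifferentiableAt ℝ f (z + t • d)) :
    HasDerivAt (fun s : ℝ => f (z + s • d)) (fderiv ℝ f (z + t • d) d) t := by
  have hL : HasDerivAt (fun s : ℝ => z + s • d) d t := by
    simpa using ((hasDerivAt_id t).smul_const d).const_add z
  exact hf.hasFDerivAt.comp_hasDerivAt t hL

private lemma eventually_contDiffAt_line {f : ℂ → ℝ} {z : ℂ}
    (hf : ContDiffAt ℝ 2 f z) (d : ℂ) :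
    ∀ᶠ t : ℝ in nhds 0, ContDiffAt ℝ 2 f (z + t • d) := by
  have hc : Continuous fun t : ℝ => z + t • d := by continuity
  have hL : Tendsto (fun t : ℝ => z + t • d) (nhds 0) (nhds z) := by
    simpa using hc.tendsto 0
  exact hL.eventually (hf.eventually (by decide))

private lemma hasDerivAt_deriv_line {f : ℂ → ℝ} {z : ℂ} (hf : ContDiffAt ℝ 2 f z) (d : ℂ) :
    HasDerivAt (deriv fun t : ℝ => f (z + t • d)) (iteratedFDeriv ℝ 2 f z ![d, d]) 0 := by
  have hev := eventually_contDiffAt_line hf d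
  have E : (deriv fun t : ℝ => f (z + t • d))
      =ᶠ[nhds (0:ℝ)] fun t : ℝ => fderiv ℝ f (z + t • d) d := by
    filter_upwards [hev] with t ht
    exact (hasDerivAt_line f z d t (ht.differentiableAt (by decide))).deriv
  have hF : DifferentiableAt ℝ (fderiv ℝ f) z :=
    (hf.fderiv_right (m := 1) (by decide)).differentiableAt one_ne_zero
  have hline : HasDerivAt (fun t : ℝ => z + t • d) d 0 := by
    simpa using ((hasDerivAt_id (0:ℝ)).smul_const d).const_add z
  have h0 : z + (0:ℝ) • d = z := by simp
  have comp : HasDerivAt (fun t : ℝ => fderiv ℝ f (z + t • d)) (fderiv ℝ (fderiv ℝ f) z d) 0 := by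
    have := (h0.symm ▸ hF.hasFDerivAt :
        HasFDerivAt (fderiv ℝ f) (fderiv ℝ (fderiv ℝ f) z) (z + (0:ℝ) • d)).comp_hasDerivAt 0 hline
    exact this
  have happ : HasDerivAt (fun t : ℝ => fderiv ℝ f (z + t • d) d)
      (fderiv ℝ (fderiv ℝ f) z d d) 0 := by
    simpa using comp.clm_apply (hasDerivAt_const 0 d)
  have hiter : iteratedFDeriv ℝ 2 f z ![d, d] = fderiv ℝ (fderiv ℝ f) z d d := by
    rw [iteratedFDeriv_two_apply]; rfl
  rw [hiter]
  exact (E.hasDerivAt_iff).2 happ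

private lemma second_deriv_nonpos {g : ℝ → ℝ} {L : ℝ}
    (hdiff : ∀ᶠ t : ℝ in nhds 0, DifferentiableAt ℝ g t)
    (hL : HasDerivAt (deriv g) L 0) (hmax : IsLocalMax g 0) : L ≤ 0 := by
  by_contra hpos
  push_neg at hpos
  have h0 : deriv g 0 = 0 := hmax.deriv_eq_zero
  have hslope : Tendsto (slope (deriv g) 0) (nhdsWithin 0 {(0:ℝ)}ᶜ) (nhds L) :=
    hasDerivAt_iff_tendsto_slope.1 hL
  have hslope' : Tendsto (slope (deriv g) 0) (nhdsWithin 0 (Set.Ioi 0)) (nhds L) :=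
    hslope.mono_left (nhdsWithin_mono _ (fun t ht => ne_of_gt ht))
  have hev : ∀ᶠ t in nhdsWithin 0 (Set.Ioi (0:ℝ)), 0 < deriv g t := by
    filter_upwards [hslope'.eventually (eventually_gt_nhds hpos), self_mem_nhdsWithin]
      with t ht ht'
    have hs : slope (deriv g) 0 t = deriv g t / t := by
      rw [slope_def_field, h0, sub_zero, sub_zero]
    rw [hs] at ht
    have := mul_pos ht (Set.mem_Ioi.1 ht')
    rwa [div_mul_cancel₀ _ (ne_of_gt (Set.mem_Ioi.1 ht'))] at this
  have hcomb : ∀ᶠ t in nhdsWithin 0 (Set.Ioi (0:ℝ)),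
      0 < deriv g t ∧ g t ≤ g 0 ∧ DifferentiableAt ℝ g t := by
    filter_upwards [hev, (hmax.and hdiff).filter_mono nhdsWithin_le_nhds] with t h1 h2
    exact ⟨h1, h2.1, h2.2⟩
  obtain ⟨u, hu, hsub⟩ := mem_nhdsGT_iff_exists_Ioo_subset.1 hcomb
  have hu0 : (0:ℝ) < u := Set.mem_Ioi.1 hu
  set δ : ℝ := u / 2 with hδ
  have hδ0 : 0 < δ := by positivity
  have hδu : δ < u := by simp [hδ]; linarith
  have hdiff0 : DifferentiableAt ℝ g 0 := hdiff.self_of_nhds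
  have hcont : ContinuousOn g (Set.Icc 0 δ) := by
    intro x hx
    rcases eq_or_lt_of_le hx.1 with h | h
    · exact (h ▸ hdiff0).continuousAt.continuousWithinAt
    · exact ((hsub ⟨h, lt_of_le_of_lt hx.2 hδu⟩).2.2.continuousAt.continuousWithinAt)
  have hmono : StrictMonoOn g (Set.Icc 0 δ) := by
    apply strictMonoOn_of_deriv_pos (convex_Icc 0 δ) hcont
    intro x hx
    rw [interior_Icc] at hx
    exact (hsub ⟨hx.1, lt_trans hx.2 hδu⟩).1
  have h1 : g 0 < g δ := hmono (Set.left_mem_Icc.2 (le_of_lt hδ0))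
    (Set.right_mem_Icc.2 (le_of_lt hδ0)) hδ0
  have h2 : g δ ≤ g 0 := (hsub ⟨hδ0, hδu⟩).2.1
  linarith

private lemma lap_nonpos_of_isLocalMax {f : ℂ → ℝ} {z : ℂ}
    (hf : ContDiffAt ℝ 2 f z) (hmax : IsLocalMax f z) : lap f z ≤ 0 := by
  have key : ∀ d : ℂ, iteratedFDeriv ℝ 2 f z ![d, d] ≤ 0 := by
    intro d
    have hev := eventually_contDiffAt_line hf d
    have hdiff : ∀ᶠ t : ℝ in nhds 0, DifferentiableAt ℝ (fun s : ℝ => f (z + s • d)) t := by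
      filter_upwards [hev] with t ht
      exact (hasDerivAt_line f z d t (ht.differentiableAt (by decide))).differentiableAt
    have hc : Continuous fun t : ℝ => z + t • d := by continuity
    have hL : Tendsto (fun t : ℝ => z + t • d) (nhds 0) (nhds z) := by
      simpa using hc.tendsto 0
    have hmax' : IsLocalMax (fun t : ℝ => f (z + t • d)) 0 := by
      have h2 := hL.eventually hmax
      refine h2.mono fun t ht => ?_
      simpa using ht
    exact second_deriv_nonpos hdiff (hasDerivAt_deriv_line hf d) hmax'
  have := add_nonpos (key 1) (key Complex.I)
  simpa [lap] using this

end Core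

section Lin

private lemma lap_neg (f : ℂ → ℝ) (z : ℂ) : lap (fun w => -(f w)) z = - lap f z := by
  have h : (fun w => -(f w)) = -f := rfl
  simp only [lap, h, iteratedFDeriv_neg_apply, ContinuousMultilinearMap.neg_apply]
  ring

private lemma lap_add_s8 {f g : ℂ → ℝ} {z : ℂ} (hf : ContDiffAt ℝ 2 f z) (hg : ContDiffAt ℝ 2 g z) :
    lap (fun w => f w + g w) z = lap f z + lap g z := by
  have key : ∀ m : Fin 2 → ℂ, iteratedFDeriv ℝ 2 (fun w => f w + g w) z m
      = iteratedFDeriv ℝ 2 f z m + iteratedFDeriv ℝ 2 g z m := by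
    intro m
    rw [iteratedFDeriv_two_apply, iteratedFDeriv_two_apply, iteratedFDeriv_two_apply]
    have E : fderiv ℝ (fun w => f w + g w) =ᶠ[nhds z] fun w => fderiv ℝ f w + fderiv ℝ g w := by
      filter_upwards [hf.eventually (by decide), hg.eventually (by decide)] with w hfw hgw
      exact fderiv_add (hfw.differentiableAt (by decide)) (hgw.differentiableAt (by decide))
    have hDf : DifferentiableAt ℝ (fderiv ℝ f) z :=
      (hf.fderiv_right (m := 1) (by decide)).differentiableAt one_ne_zero
    have hDg : DifferentiableAt ℝ (fderiv ℝ g) z :=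
      (hg.fderiv_right (m := 1) (by decide)).differentiableAt one_ne_zero
    rw [E.fderiv_eq, fderiv_fun_add hDf hDg]
    simp
  simp only [lap, key]
  ring

private lemma lap_const_mul {f : ℂ → ℝ} {z : ℂ} (hf : ContDiffAt ℝ 2 f z) (c : ℝ) :
    lap (fun w => c * f w) z = c * lap f z := by
  have key : ∀ m : Fin 2 → ℂ, iteratedFDeriv ℝ 2 (fun w => c * f w) z m
      = c * iteratedFDeriv ℝ 2 f z m := by
    intro m
    rw [iteratedFDeriv_two_apply, iteratedFDeriv_two_apply]
    have E : fderiv ℝ (fun w => c * f w) =ᶠ[nhds z] fun w => c • fderiv ℝ f w := by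
      filter_upwards [hf.eventually (by decide)] with w hfw
      exact fderiv_const_mul (hfw.differentiableAt (by decide)) c
    have hDf : DifferentiableAt ℝ (fderiv ℝ f) z :=
      (hf.fderiv_right (m := 1) (by decide)).differentiableAt one_ne_zero
    rw [E.fderiv_eq, fderiv_fun_const_smul hDf c]
    simp
  simp only [lap, key]
  ring

private lemma lap_sub_s8 {f g : ℂ → ℝ} {z : ℂ} (hf : ContDiffAt ℝ 2 f z) (hg : ContDiffAt ℝ 2 g z) :
    lap (fun w => f w - g w) z = lap f z - lap g z := by
  have h : (fun w => f w - g w) = fun w => f w + (-(g w)) := by funext w; ring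
  rw [h, lap_add_s8 hf hg.neg, lap_neg]
  ring

private lemma lap_const (c : ℝ) (z : ℂ) : lap (fun _ : ℂ => c) z = 0 := by
  simp [lap, iteratedFDeriv_const_of_ne]

end Lin

section Quad

private lemma quad_hasDerivAt (A B C t : ℝ) :
    HasDerivAt (fun s : ℝ => A + B * s + C * s ^ 2) (B + 2 * C * t) t := by
  have h1 : HasDerivAt (fun s : ℝ => A + B * s) B t := by
    simpa using ((hasDerivAt_id t).const_mul B).const_add A
  have h2 : HasDerivAt (fun s : ℝ => C * s ^ 2) (C * (2 * t)) t := by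
    have := (hasDerivAt_pow 2 t).const_mul C
    refine this.congr_deriv ?_
    push_cast
    ring
  refine (h1.add h2).congr_deriv ?_
  ring

private lemma log_quad_deriv2 (k A B C : ℝ) (hA : 0 < A) :
    HasDerivAt (deriv fun t : ℝ => k * Real.log (A + B * t + C * t ^ 2))
      (k * ((2 * C * A - B ^ 2) / A ^ 2)) 0 := by
  have hqc : Continuous fun t : ℝ => A + B * t + C * t ^ 2 := by continuity
  have hev : ∀ᶠ t : ℝ in nhds 0, 0 < A + B * t + C * t ^ 2 := by
    have h1 : Tendsto (fun t : ℝ => A + B * t + C * t ^ 2) (nhds 0) (nhds A) := by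
      have := hqc.tendsto 0
      simpa using this
    exact h1.eventually (eventually_gt_nhds hA)
  have E : (deriv fun t : ℝ => k * Real.log (A + B * t + C * t ^ 2))
      =ᶠ[nhds (0:ℝ)] fun t => k * ((B + 2 * C * t) / (A + B * t + C * t ^ 2)) := by
    filter_upwards [hev] with t ht
    exact (((quad_hasDerivAt A B C t).log (ne_of_gt ht)).const_mul k).deriv
  refine (E.hasDerivAt_iff).2 ?_
  have hnum : HasDerivAt (fun t : ℝ => B + 2 * C * t) (2 * C) 0 := by
    simpa using ((hasDerivAt_id (0:ℝ)).const_mul (2 * C)).const_add B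
  have hden := quad_hasDerivAt A B C 0
  have hA0 : A + B * 0 + C * 0 ^ 2 ≠ 0 := by simpa using ne_of_gt hA
  have hdiv := (hnum.div hden hA0).const_mul k
  refine hdiv.congr_deriv ?_
  norm_num
  left
  ring

private lemma exp_quad_deriv1 (α A B C : ℝ) :
    HasDerivAt (fun t : ℝ => Real.exp (-(α * (A + B * t + C * t ^ 2))))
      (-(α * B) * Real.exp (-(α * A))) 0 := by
  have h1 : HasDerivAt (fun t : ℝ => -(α * (A + B * t + C * t ^ 2)))
      (-(α * (B + 2 * C * 0))) 0 := ((quad_hasDerivAt A B C 0).const_mul α).neg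
  have := h1.exp
  convert this using 1
  simp
  ring_nf

private lemma exp_quad_deriv2 (α A B C : ℝ) :
    HasDerivAt (deriv fun t : ℝ => Real.exp (-(α * (A + B * t + C * t ^ 2))))
      ((α ^ 2 * B ^ 2 - 2 * α * C) * Real.exp (-(α * A))) 0 := by
  have E : (deriv fun t : ℝ => Real.exp (-(α * (A + B * t + C * t ^ 2))))
      =ᶠ[nhds (0:ℝ)] fun t => -(α * (B + 2 * C * t)) * Real.exp (-(α * (A + B * t + C * t ^ 2))) := by
    refine Eventually.of_forall fun t => ?_
    have h1 : HasDerivAt (fun s : ℝ => -(α * (A + B * s + C * s ^ 2)))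
        (-(α * (B + 2 * C * t))) t := ((quad_hasDerivAt A B C t).const_mul α).neg
    simpa [mul_comm] using h1.exp.deriv
  refine (E.hasDerivAt_iff).2 ?_
  have hc : HasDerivAt (fun t : ℝ => -(α * (B + 2 * C * t))) (-(α * (2 * C))) 0 := by
    have : HasDerivAt (fun t : ℝ => B + 2 * C * t) (2 * C) 0 := by
      simpa using ((hasDerivAt_id (0:ℝ)).const_mul (2 * C)).const_add B
    exact (this.const_mul α).neg
  have hmul := hc.mul (exp_quad_deriv1 α A B C)
  refine hmul.congr_deriv ?_
  simp
  ring

section LapBarriers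
open Complex

private lemma normSq_line (w d : ℂ) (t : ℝ) :
    Complex.normSq (w + t • d) = Complex.normSq w
      + (2 * (w.re * d.re + w.im * d.im)) * t + Complex.normSq d * t ^ 2 := by
  simp [Complex.normSq_apply, Complex.add_re, Complex.add_im, Complex.smul_re, Complex.smul_im]
  ring

private lemma contDiff_normSq : ContDiff ℝ 2 (fun w : ℂ => Complex.normSq w) := by
  have h : (fun w : ℂ => Complex.normSq w) = fun w : ℂ => w.re * w.re + w.im * w.im := by
    funext w; exact Complex.normSq_apply w
  rw [h]
  exact (Complex.reCLM.contDiff.mul Complex.reCLM.contDiff).add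
    (Complex.imCLM.contDiff.mul Complex.imCLM.contDiff)

private lemma logabs_eq (c : ℝ) :
    (fun w : ℂ => c * Real.log (‖w‖))
      = fun w : ℂ => (c / 2) * Real.log (Complex.normSq w) := by
  funext w
  rw [Complex.norm_def, Real.log_sqrt (Complex.normSq_nonneg w)]
  ring

private lemma contDiffAt_logabs {z : ℂ} (hz : z ≠ 0) (c : ℝ) :
    ContDiffAt ℝ 2 (fun w : ℂ => c * Real.log (‖w‖)) z := by
  rw [logabs_eq]
  have hns : Complex.normSq z ≠ 0 := fun h => hz (Complex.normSq_eq_zero.1 h)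
  have hlog : ContDiffAt ℝ 2 Real.log (Complex.normSq z) := Real.contDiffAt_log.2 hns
  exact contDiffAt_const.mul (hlog.comp z contDiff_normSq.contDiffAt)

private lemma lap_logabs {z : ℂ} (hz : z ≠ 0) (c : ℝ) :
    lap (fun w : ℂ => c * Real.log (‖w‖)) z = 0 := by
  have hA : 0 < Complex.normSq z := Complex.normSq_pos.2 hz
  have key : ∀ d : ℂ, iteratedFDeriv ℝ 2 (fun w : ℂ => c * Real.log (‖w‖)) z ![d, d]
      = (c / 2) * ((2 * Complex.normSq d * Complex.normSq z
          - (2 * (z.re * d.re + z.im * d.im)) ^ 2) / (Complex.normSq z) ^ 2) := by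
    intro d
    have hCD := contDiffAt_logabs hz c
    have h1 := hasDerivAt_deriv_line hCD d
    have hfun : (fun t : ℝ => (fun w : ℂ => c * Real.log (‖w‖)) (z + t • d))
        = fun t : ℝ => (c / 2) * Real.log (Complex.normSq z
            + (2 * (z.re * d.re + z.im * d.im)) * t + Complex.normSq d * t ^ 2) := by
      funext t
      show c * Real.log (‖z + t • d‖) = _
      rw [Complex.norm_def, Real.log_sqrt (Complex.normSq_nonneg _), normSq_line]
      ring
    rw [hfun] at h1
    exact h1.unique (log_quad_deriv2 (c / 2) _ _ _ hA)
  have e1 := key 1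
  have eI := key Complex.I
  simp only [Complex.one_re, Complex.one_im, Complex.I_re, Complex.I_im,
    Complex.normSq_one, Complex.normSq_I] at e1 eI
  have hne : z.re * z.re + z.im * z.im ≠ 0 := by
    rw [← Complex.normSq_apply]; exact ne_of_gt hA
  rw [lap, e1, eI, Complex.normSq_apply]
  field_simp
  ring

private lemma contDiffAt_gauss (α : ℝ) (y z : ℂ) :
    ContDiffAt ℝ 2 (fun w : ℂ => Real.exp (-(α * Complex.normSq (w - y)))) z := by
  have h1 : ContDiff ℝ 2 (fun w : ℂ => -(α * Complex.normSq (w - y))) := by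
    have hsub : ContDiff ℝ 2 (fun w : ℂ => w - y) := contDiff_id.sub contDiff_const
    exact (contDiff_const.mul (contDiff_normSq.comp hsub)).neg
  exact Real.contDiff_exp.contDiffAt.comp z h1.contDiffAt

private lemma lap_gauss (α : ℝ) (y z : ℂ) :
    lap (fun w : ℂ => Real.exp (-(α * Complex.normSq (w - y)))) z
      = (4 * α ^ 2 * Complex.normSq (z - y) - 4 * α)
          * Real.exp (-(α * Complex.normSq (z - y))) := by
  have key : ∀ d : ℂ, iteratedFDeriv ℝ 2 (fun w : ℂ => Real.exp (-(α * Complex.normSq (w - y)))) z ![d, d]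
      = (α ^ 2 * (2 * ((z - y).re * d.re + (z - y).im * d.im)) ^ 2
          - 2 * α * Complex.normSq d) * Real.exp (-(α * Complex.normSq (z - y))) := by
    intro d
    have h1 := hasDerivAt_deriv_line (contDiffAt_gauss α y z) d
    have hfun : (fun t : ℝ => (fun w : ℂ => Real.exp (-(α * Complex.normSq (w - y)))) (z + t • d))
        = fun t : ℝ => Real.exp (-(α * (Complex.normSq (z - y)
            + (2 * ((z - y).re * d.re + (z - y).im * d.im)) * t + Complex.normSq d * t ^ 2))) := by
      funext t
      show Real.exp (-(α * Complex.normSq (z + t • d - y))) = _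
      rw [show z + t • d - y = (z - y) + t • d by ring, normSq_line]
    rw [hfun] at h1
    exact h1.unique (exp_quad_deriv2 α _ _ _)
  have e1 := key 1
  have eI := key Complex.I
  simp only [Complex.one_re, Complex.one_im, Complex.I_re, Complex.I_im,
    Complex.normSq_one, Complex.normSq_I] at e1 eI
  rw [lap, e1, eI, Complex.normSq_apply]
  ring

end LapBarriers

section Asym

private lemma smooth_cd {f : ℂ → ℝ} (hf : SmoothOffZero f) {z : ℂ} (hz : z ≠ 0) :
    ContDiffAt ℝ 2 f z := by
  have := hf.contDiffAt (isOpen_compl_singleton.mem_nhds hz)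
  exact this.of_le (by decide)

private lemma smooth_cont {f : ℂ → ℝ} (hf : SmoothOffZero f) :
    ContinuousOn f {(0:ℂ)}ᶜ := hf.continuousOn

private lemma tendsto_log_abs_atBot :
    Tendsto (fun z : ℂ => Real.log (‖z‖)) (nhdsWithin 0 {(0:ℂ)}ᶜ) atBot := by
  have h1 : Tendsto (fun z : ℂ => ‖z‖) (nhdsWithin 0 {(0:ℂ)}ᶜ)
      (nhdsWithin 0 {(0:ℝ)}ᶜ) := by
    apply tendsto_nhdsWithin_of_tendsto_nhds_of_eventually_within
    · have h : Tendsto (fun z : ℂ => ‖z‖) (nhds 0) (nhds 0) := by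
        simpa using continuous_norm.tendsto (0:ℂ)
      exact h.mono_left nhdsWithin_le_nhds
    · filter_upwards [self_mem_nhdsWithin] with z hz
      simpa using hz
  exact Real.tendsto_log_nhdsNE_zero.comp h1

private lemma eventually_abs_lt_one :
    ∀ᶠ z : ℂ in nhdsWithin 0 {(0:ℂ)}ᶜ, ‖z‖ < 1 := by
  have h : Tendsto (fun z : ℂ => ‖z‖) (nhdsWithin 0 {(0:ℂ)}ᶜ) (nhds 0) := by
    have := continuous_norm.tendsto (0:ℂ)
    simpa using this.mono_left nhdsWithin_le_nhds
  exact h.eventually (eventually_lt_nhds one_pos)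

private lemma eventually_log_ne :
    ∀ᶠ z : ℂ in nhdsWithin 0 {(0:ℂ)}ᶜ, Real.log (‖z‖) ≠ 0 := by
  filter_upwards [eventually_abs_lt_one, self_mem_nhdsWithin] with z h1 h2
  have habs : 0 < ‖z‖ := by
    simpa using norm_ne_zero_iff.2 h2
  exact ne_of_lt (Real.log_neg habs h1)

private lemma tendsto_atBot_of_logAsym {f : ℂ → ℝ} {γ : ℝ}
    (h : LogAsymAtZero γ f) (hγ : 0 < γ) :
    Tendsto f (nhdsWithin 0 {(0:ℂ)}ᶜ) atBot := by
  have hmul := Filter.Tendsto.pos_mul_atBot hγ h tendsto_log_abs_atBot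
  refine hmul.congr' ?_
  filter_upwards [eventually_log_ne] with z hne
  exact div_mul_cancel₀ _ hne

private lemma logAsym_sub {f g : ℂ → ℝ} {γ δ : ℝ}
    (hf : LogAsymAtZero γ f) (hg : LogAsymAtZero δ g) :
    LogAsymAtZero (γ - δ) (fun z => f z - g z) := by
  have := hf.sub hg
  unfold LogAsymAtZero
  simpa [sub_div] using this

private lemma diff_atBot {f g : ℂ → ℝ} {γ δ : ℝ}
    (hf : LogAsymAtZero γ f) (hg : LogAsymAtZero δ g) (h : δ < γ) :
    Tendsto (fun z => f z - g z) (nhdsWithin 0 {(0:ℂ)}ᶜ) atBot :=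
  tendsto_atBot_of_logAsym (logAsym_sub hf hg) (by linarith)

private lemma infty_bound {f : ℂ → ℝ} (hf : TendstoZeroAtInfty f) {m : ℝ} (hm : 0 < m) :
    ∃ R : ℝ, ∀ z : ℂ, R ≤ ‖z‖ → f z < m := by
  have h : ∀ᶠ z in comap (fun z : ℂ => ‖z‖) atTop, f z < m :=
    hf.eventually (eventually_lt_nhds hm)
  obtain ⟨t, ht, hsub⟩ := Filter.mem_comap.1 h
  obtain ⟨R, hR⟩ := Filter.mem_atTop_sets.1 ht
  exact ⟨R, fun z hz => hsub (hR _ hz)⟩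

private lemma zero_bound {f : ℂ → ℝ} {m : ℝ}
    (hf : Tendsto f (nhdsWithin 0 {(0:ℂ)}ᶜ) atBot) :
    ∃ r : ℝ, 0 < r ∧ ∀ z : ℂ, z ≠ 0 → ‖z‖ < r → f z < m := by
  have h : ∀ᶠ z in nhdsWithin 0 {(0:ℂ)}ᶜ, f z < m := hf.eventually (eventually_lt_atBot m)
  rw [eventually_nhdsWithin_iff, Metric.eventually_nhds_iff] at h
  obtain ⟨r, hr, hball⟩ := h
  refine ⟨r, hr, fun z hz hzr => hball ?_ hz⟩
  simpa [Complex.dist_eq] using hzr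

private lemma exists_interior_max {F : ℂ → ℝ} {r R : ℝ} (hr : 0 < r) (hrR : r < R)
    (hFc : ContinuousOn F {(0:ℂ)}ᶜ)
    {z₁ : ℂ} (hz₁r : r ≤ ‖z₁‖) (hz₁R : ‖z₁‖ ≤ R)
    (hbound : ∀ z : ℂ, z ≠ 0 → (‖z‖ = r ∨ ‖z‖ = R) → F z < F z₁) :
    ∃ z₀ : ℂ, z₀ ≠ 0 ∧ ‖z₀‖ ≤ R ∧ F z₁ ≤ F z₀ ∧ IsLocalMax F z₀ := by
  set K : Set ℂ := (fun z : ℂ => ‖z‖) ⁻¹' Set.Icc r R with hK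
  have hKsub : K ⊆ {(0:ℂ)}ᶜ := by
    intro z hz
    simp only [Set.mem_compl_iff, Set.mem_singleton_iff]
    intro h0
    rw [h0] at hz
    simp only [hK, Set.mem_preimage, map_zero, norm_zero, Set.mem_Icc] at hz
    linarith [hz.1]
  have hKc : IsCompact K := by
    apply Metric.isCompact_of_isClosed_isBounded
    · exact IsClosed.preimage continuous_norm isClosed_Icc
    · apply Bornology.IsBounded.subset (Metric.isBounded_closedBall (x := (0:ℂ)) (r := R))
      intro z hz
      simp only [hK, Set.mem_preimage, Set.mem_Icc] at hz
      simpa [Metric.mem_closedBall, Complex.dist_eq] using hz.2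
  have hz₁K : z₁ ∈ K := by simp [hK, Set.mem_Icc, hz₁r, hz₁R]
  obtain ⟨z₀, hz₀K, hmax⟩ := hKc.exists_isMaxOn ⟨z₁, hz₁K⟩ (hFc.mono hKsub)
  have hz₀ : z₀ ≠ 0 := hKsub hz₀K
  have hz₀Icc : ‖z₀‖ ∈ Set.Icc r R := hz₀K
  have hF₁ : F z₁ ≤ F z₀ := hmax hz₁K
  have hz₀Ioo : ‖z₀‖ ∈ Set.Ioo r R := by
    rcases eq_or_lt_of_le hz₀Icc.1 with h | h
    · exact absurd (hbound z₀ hz₀ (Or.inl h.symm)) (by linarith)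
    rcases eq_or_lt_of_le hz₀Icc.2 with h2 | h2
    · exact absurd (hbound z₀ hz₀ (Or.inr h2)) (by linarith)
    exact ⟨h, h2⟩
  refine ⟨z₀, hz₀, hz₀Icc.2, hF₁, ?_⟩
  have hO : IsOpen ((fun z : ℂ => ‖z‖) ⁻¹' Set.Ioo r R) :=
    IsOpen.preimage continuous_norm isOpen_Ioo
  have hOsub : (fun z : ℂ => ‖z‖) ⁻¹' Set.Ioo r R ⊆ K := by
    intro z hz
    exact Set.Ioo_subset_Icc_self hz
  filter_upwards [hO.mem_nhds hz₀Ioo] with z hz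
  exact hmax (hOsub hz)

private lemma isLocalMax_left_of_max {w s : ℂ → ℝ} {z₀ : ℂ}
    (hF : IsLocalMax (fun z => max (w z) (s z)) z₀) (h : s z₀ ≤ w z₀) : IsLocalMax w z₀ := by
  filter_upwards [hF] with z hz
  calc w z ≤ max (w z) (s z) := le_max_left _ _
    _ ≤ max (w z₀) (s z₀) := hz
    _ = w z₀ := max_eq_left h

end Asym

section Squeeze

private lemma lap_le_of_localmax_sub {f g : ℂ → ℝ} {z : ℂ}
    (hf : ContDiffAt ℝ 2 f z) (hg : ContDiffAt ℝ 2 g z)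
    (hm : IsLocalMax (fun w => f w - g w) z) : lap f z ≤ lap g z := by
  have h := lap_nonpos_of_isLocalMax (hf.sub hg) hm
  rw [lap_sub_s8 hf hg] at h
  linarith

private lemma isLocalMax_right_of_max {w s : ℂ → ℝ} {z₀ : ℂ}
    (hF : IsLocalMax (fun z => max (w z) (s z)) z₀) (h : w z₀ ≤ s z₀) : IsLocalMax s z₀ := by
  filter_upwards [hF] with z hz
  calc s z ≤ max (w z) (s z) := le_max_right _ _
    _ ≤ max (w z₀) (s z₀) := hz
    _ = s z₀ := max_eq_right h

private lemma squeeze {a : ℝ} (ha : 0 < a) {u₁ v₁ u₂ v₂ : ℂ → ℝ}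
    (h₁ : IsTodaSol a a u₁ v₁) (h₂ : IsTodaSol a a u₂ v₂)
    (hu0 : Tendsto (fun z => u₁ z - u₂ z) (nhdsWithin 0 {(0:ℂ)}ᶜ) atBot)
    (hv0 : Tendsto (fun z => v₁ z - v₂ z) (nhdsWithin 0 {(0:ℂ)}ᶜ) atBot)
    (hui : TendstoZeroAtInfty u₁) (hui' : TendstoZeroAtInfty u₂)
    (hvi : TendstoZeroAtInfty v₁) (hvi' : TendstoZeroAtInfty v₂) :
    ∀ z : ℂ, z ≠ 0 → u₁ z ≤ u₂ z ∧ v₁ z ≤ v₂ z := by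
  set w : ℂ → ℝ := fun z => u₁ z - u₂ z with hw
  set s : ℂ → ℝ := fun z => v₁ z - v₂ z with hs
  by_contra hcon
  push_neg at hcon
  obtain ⟨z₁, hz₁, hz₁'⟩ := hcon
  have hm : 0 < max (w z₁) (s z₁) := by
    rcases le_or_gt (u₁ z₁) (u₂ z₁) with h | h
    · have h2 := hz₁' h
      exact lt_of_lt_of_le (show (0:ℝ) < v₁ z₁ - v₂ z₁ by linarith) (le_max_right _ _)
    · exact lt_of_lt_of_le (show (0:ℝ) < u₁ z₁ - u₂ z₁ by linarith) (le_max_left _ _)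
  set F : ℂ → ℝ := fun z => max (w z) (s z) with hF
  set m : ℝ := F z₁ with hmdef
  -- bounds at infinity
  have hwi : TendstoZeroAtInfty w := by
    have := hui.sub hui'
    rw [sub_zero] at this; exact this
  have hsi : TendstoZeroAtInfty s := by
    have := hvi.sub hvi'
    rw [sub_zero] at this; exact this
  obtain ⟨R₁, hR₁⟩ := infty_bound hwi hm
  obtain ⟨R₂, hR₂⟩ := infty_bound hsi hm
  set R : ℝ := max (max R₁ R₂) (‖z₁‖ + 1) with hR
  -- bounds at zero
  obtain ⟨r₁, hr₁, hr₁'⟩ := zero_bound (m := m) hu0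
  obtain ⟨r₂, hr₂, hr₂'⟩ := zero_bound (m := m) hv0
  have habs₁ : 0 < ‖z₁‖ := by simpa using hz₁
  set r : ℝ := min (min r₁ r₂ / 2) (‖z₁‖) with hr
  have hrpos : 0 < r := by
    apply lt_min _ habs₁
    positivity
  -- continuity
  have hwc : ContinuousOn w {(0:ℂ)}ᶜ := (smooth_cont h₁.1).sub (smooth_cont h₂.1)
  have hsc : ContinuousOn s {(0:ℂ)}ᶜ := (smooth_cont h₁.2.1).sub (smooth_cont h₂.2.1)
  have hFc : ContinuousOn F {(0:ℂ)}ᶜ := fun x hx => (hwc x hx).max (hsc x hx)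
  have hbound : ∀ z : ℂ, z ≠ 0 → (‖z‖ = r ∨ ‖z‖ = R) → F z < F z₁ := by
    intro z hz hcase
    rw [← hmdef]
    rcases hcase with h | h
    · have h1 : ‖z‖ < r₁ := by
        have : r ≤ min r₁ r₂ / 2 := min_le_left _ _
        have : r < min r₁ r₂ := by
          have := lt_min hr₁ hr₂
          simp only [hr] at *
          have hmin : 0 < min r₁ r₂ := lt_min hr₁ hr₂
          calc min (min r₁ r₂ / 2) (‖z₁‖) ≤ min r₁ r₂ / 2 := min_le_left _ _
            _ < min r₁ r₂ := by linarith
        rw [h]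
        exact lt_of_lt_of_le this (min_le_left _ _)
      have h2 : ‖z‖ < r₂ := by
        have hmin : 0 < min r₁ r₂ := lt_min hr₁ hr₂
        have : r < min r₁ r₂ := by
          calc r ≤ min r₁ r₂ / 2 := min_le_left _ _
            _ < min r₁ r₂ := by linarith
        rw [h]
        exact lt_of_lt_of_le this (min_le_right _ _)
      exact max_lt (hr₁' z hz h1) (hr₂' z hz h2)
    · have h1 : R₁ ≤ ‖z‖ := by
        rw [h]
        calc R₁ ≤ max R₁ R₂ := le_max_left _ _
          _ ≤ R := le_max_left _ _
      have h2 : R₂ ≤ ‖z‖ := by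
        rw [h]
        calc R₂ ≤ max R₁ R₂ := le_max_right _ _
          _ ≤ R := le_max_left _ _
      exact max_lt (hR₁ z h1) (hR₂ z h2)
  have hz₁r : r ≤ ‖z₁‖ := min_le_right _ _
  have hz₁R : ‖z₁‖ ≤ R := by
    calc ‖z₁‖ ≤ ‖z₁‖ + 1 := by linarith
      _ ≤ R := le_max_right _ _
  have hrR : r < R := by
    calc r ≤ ‖z₁‖ := hz₁r
      _ < ‖z₁‖ + 1 := by linarith
      _ ≤ R := le_max_right _ _
  obtain ⟨z₀, hz₀, hz₀R, hFz₀, hlocal⟩ := exists_interior_max hrpos hrR hFc hz₁r hz₁R hbound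
  -- contradiction at z₀
  have hcdu₁ := smooth_cd h₁.1 hz₀
  have hcdu₂ := smooth_cd h₂.1 hz₀
  have hcdv₁ := smooth_cd h₁.2.1 hz₀
  have hcdv₂ := smooth_cd h₂.2.1 hz₀
  obtain ⟨heq₁u, heq₁v⟩ := h₁.2.2 z₀ hz₀
  obtain ⟨heq₂u, heq₂v⟩ := h₂.2.2 z₀ hz₀
  have hFpos : 0 < F z₀ := lt_of_lt_of_le hm hFz₀
  rcases le_total (s z₀) (w z₀) with hcase | hcase
  · -- w branch
    have hwmax : IsLocalMax w z₀ := isLocalMax_left_of_max hlocal hcase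
    have hweq : w z₀ = F z₀ := (max_eq_left hcase).symm
    have hlap : lap u₁ z₀ ≤ lap u₂ z₀ := lap_le_of_localmax_sub hcdu₁ hcdu₂ hwmax
    rw [heq₁u, heq₂u] at hlap
    have hup : u₂ z₀ < u₁ z₀ := by
      have : 0 < w z₀ := by rw [hweq]; exact hFpos
      simp only [hw] at this; linarith
    have he1 : Real.exp (a * u₂ z₀) < Real.exp (a * u₁ z₀) :=
      Real.exp_lt_exp.2 (by nlinarith)
    have he2 : Real.exp (v₁ z₀ - u₁ z₀) ≤ Real.exp (v₂ z₀ - u₂ z₀) := by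
      apply Real.exp_le_exp.2
      have : s z₀ ≤ w z₀ := hcase
      simp only [hw, hs] at this
      linarith
    linarith
  · -- s branch
    have hsmax : IsLocalMax s z₀ := isLocalMax_right_of_max hlocal hcase
    have hseq : s z₀ = F z₀ := (max_eq_right hcase).symm
    have hlap : lap v₁ z₀ ≤ lap v₂ z₀ := lap_le_of_localmax_sub hcdv₁ hcdv₂ hsmax
    rw [heq₁v, heq₂v] at hlap
    have hvp : v₂ z₀ < v₁ z₀ := by
      have : 0 < s z₀ := by rw [hseq]; exact hFpos
      simp only [hs] at this; linarith
    have he1 : Real.exp (v₂ z₀ - u₂ z₀) ≤ Real.exp (v₁ z₀ - u₁ z₀) := by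
      apply Real.exp_le_exp.2
      have : w z₀ ≤ s z₀ := hcase
      simp only [hw, hs] at this
      linarith
    have he2 : Real.exp (-(a * v₁ z₀)) < Real.exp (-(a * v₂ z₀)) :=
      Real.exp_lt_exp.2 (by nlinarith)
    linarith
  done

end Squeeze

section SignsA

private lemma logAsym_add_barrier {V : ℂ → ℝ} {δ : ℝ} (hV : LogAsymAtZero δ V) {ε : ℝ}
    (hδε : 0 < δ + ε) :
    Tendsto (fun z : ℂ => V z + ε * Real.log (‖z‖)) (nhdsWithin 0 {(0:ℂ)}ᶜ) atBot := by
  have h : LogAsymAtZero (δ + ε) (fun z => V z + ε * Real.log (‖z‖)) := by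
    unfold LogAsymAtZero
    have h1 : Tendsto (fun z : ℂ => V z / Real.log (‖z‖) + ε)
        (nhdsWithin 0 {(0:ℂ)}ᶜ) (nhds (δ + ε)) := hV.add tendsto_const_nhds
    refine h1.congr' ?_
    filter_upwards [eventually_log_ne] with z hne
    field_simp
  exact tendsto_atBot_of_logAsym h hδε

/-- Part A of the sign lemma: nonpositivity. -/
private lemma signs_nonpos {a : ℝ} (ha : 0 < a) {U V : ℂ → ℝ} {γ : ℝ} (hγ : 0 < γ)
    (hsol : IsTodaSol a a U V)
    (hUi : TendstoZeroAtInfty U) (hVi : TendstoZeroAtInfty V)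
    (hU0 : LogAsymAtZero γ U) (hV0 : LogAsymAtZero 0 V) :
    ∀ z : ℂ, z ≠ 0 → U z ≤ 0 ∧ V z ≤ 0 := by
  by_contra hcon
  push_neg at hcon
  obtain ⟨z₁, hz₁, hz₁'⟩ := hcon
  have habs₁ : 0 < ‖z₁‖ := by simpa using hz₁
  have hm : 0 < max (U z₁) (V z₁) := by
    rcases le_or_gt (U z₁) 0 with h | h
    · exact lt_of_lt_of_le (hz₁' h) (le_max_right _ _)
    · exact lt_of_lt_of_le h (le_max_left _ _)
  set m : ℝ := max (U z₁) (V z₁) with hmdef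
  obtain ⟨R₁, hR₁⟩ := infty_bound hUi (half_pos hm)
  obtain ⟨R₂, hR₂⟩ := infty_bound hVi (half_pos hm)
  set R : ℝ := max (max R₁ R₂) (‖z₁‖ + 1) with hRdef
  have hz₁R : ‖z₁‖ < R := by
    calc ‖z₁‖ < ‖z₁‖ + 1 := by linarith
      _ ≤ R := le_max_right _ _
  have hRpos : 0 < R := lt_trans habs₁ hz₁R
  set D : ℝ := Real.log R - Real.log (‖z₁‖) with hDdef
  have hD : 0 < D := sub_pos.2 (Real.log_lt_log habs₁ hz₁R)
  set ε : ℝ := m / (4 * (D + 1)) with hεdef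
  have hε : 0 < ε := by positivity
  have hεD : ε * D < m / 2 := by
    rw [hεdef]
    rw [div_mul_eq_mul_div]
    rw [div_lt_div_iff₀ (by positivity) (by norm_num)]
    nlinarith
  set Λ : ℂ → ℝ := fun z => ε * Real.log (‖z‖) with hΛdef
  set G : ℂ → ℝ := fun z => max (U z + Λ z) (V z + Λ z) with hGdef
  set m₁ : ℝ := m + ε * Real.log (‖z₁‖) with hm₁def
  have hGz₁ : m₁ ≤ G z₁ := by
    show m₁ ≤ max (U z₁ + Λ z₁) (V z₁ + Λ z₁)
    rw [max_add_add_right]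
  -- atBot at zero for both branches
  have hUbot : Tendsto (fun z => U z + Λ z) (nhdsWithin 0 {(0:ℂ)}ᶜ) atBot :=
    logAsym_add_barrier hU0 (by linarith)
  have hVbot : Tendsto (fun z => V z + Λ z) (nhdsWithin 0 {(0:ℂ)}ᶜ) atBot :=
    logAsym_add_barrier hV0 (by linarith)
  obtain ⟨r₁, hr₁, hr₁'⟩ := zero_bound (m := m₁) hUbot
  obtain ⟨r₂, hr₂, hr₂'⟩ := zero_bound (m := m₁) hVbot
  set r : ℝ := min (min r₁ r₂ / 2) (‖z₁‖) with hrdef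
  have hrpos : 0 < r := lt_min (by positivity) habs₁
  have hrmin : r < min r₁ r₂ := by
    have hmin : 0 < min r₁ r₂ := lt_min hr₁ hr₂
    calc r ≤ min r₁ r₂ / 2 := min_le_left _ _
      _ < min r₁ r₂ := by linarith
  -- continuity of G
  have hΛc : ContinuousOn Λ {(0:ℂ)}ᶜ := by
    intro x hx
    have hxne : ‖x‖ ≠ 0 := by
      simpa using (Set.mem_compl_singleton_iff.1 hx)
    exact (((Real.continuousAt_log hxne).comp
      continuous_norm.continuousAt).const_smul ε).continuousWithinAt
  have hGc : ContinuousOn G {(0:ℂ)}ᶜ := fun x hx =>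
    (((smooth_cont hsol.1 x hx).add (hΛc x hx)).max ((smooth_cont hsol.2.1 x hx).add (hΛc x hx)))
  have hbound : ∀ z : ℂ, z ≠ 0 → (‖z‖ = r ∨ ‖z‖ = R) → G z < G z₁ := by
    intro z hz hcase
    have hlt : G z < m₁ := by
      show max (U z + Λ z) (V z + Λ z) < m₁
      rcases hcase with h | h
      · have h1 : ‖z‖ < r₁ := by
          rw [h]; exact lt_of_lt_of_le hrmin (min_le_left _ _)
        have h2 : ‖z‖ < r₂ := by
          rw [h]; exact lt_of_lt_of_le hrmin (min_le_right _ _)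
        exact max_lt (hr₁' z hz h1) (hr₂' z hz h2)
      · have h1 : R₁ ≤ ‖z‖ := by
          rw [h]; calc R₁ ≤ max R₁ R₂ := le_max_left _ _
            _ ≤ R := le_max_left _ _
        have h2 : R₂ ≤ ‖z‖ := by
          rw [h]; calc R₂ ≤ max R₁ R₂ := le_max_right _ _
            _ ≤ R := le_max_left _ _
        have hU' : U z < m / 2 := hR₁ z h1
        have hV' : V z < m / 2 := hR₂ z h2
        have hΛ' : Λ z ≤ ε * Real.log R := by
          have hlog : Real.log (‖z‖) ≤ Real.log R := by rw [h]
          exact mul_le_mul_of_nonneg_left hlog (le_of_lt hε)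
        have key : m / 2 + ε * Real.log R < m₁ := by
          rw [hm₁def]
          have : ε * Real.log R - ε * Real.log (‖z₁‖) = ε * D := by
            rw [hDdef]; ring
          nlinarith
        apply max_lt
        · linarith [hΛ', hU', key]
        · linarith [hΛ', hV', key]
    exact lt_of_lt_of_le hlt hGz₁
  obtain ⟨z₀, hz₀, hz₀R, hGz₀, hlocal⟩ :=
    exists_interior_max hrpos (lt_of_le_of_lt (min_le_right _ _) hz₁R) hGc
      (min_le_right _ _) (le_of_lt hz₁R) hbound
  -- value estimates at z₀
  have habs₀ : 0 < ‖z₀‖ := by simpa using hz₀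
  have hΛ₀ : Λ z₀ ≤ ε * Real.log R :=
    mul_le_mul_of_nonneg_left (Real.log_le_log habs₀ hz₀R) (le_of_lt hε)
  have hGval : m₁ ≤ G z₀ := le_trans hGz₁ hGz₀
  have hcdU := smooth_cd hsol.1 hz₀
  have hcdV := smooth_cd hsol.2.1 hz₀
  have hcdΛ := contDiffAt_logabs hz₀ ε
  obtain ⟨heqU, heqV⟩ := hsol.2.2 z₀ hz₀
  have hm₁R : m / 2 < m₁ - ε * Real.log R := by
    have hDR : ε * Real.log R - ε * Real.log (‖z₁‖) = ε * D := by
      rw [hDdef]; ring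
    rw [hm₁def]
    nlinarith
  rcases le_total (V z₀ + Λ z₀) (U z₀ + Λ z₀) with hcase | hcase
  · -- U branch
    have hlocal' : IsLocalMax (fun z => max (U z + Λ z) (V z + Λ z)) z₀ := hlocal
    have hmaxU : IsLocalMax (fun z => U z + Λ z) z₀ := isLocalMax_left_of_max hlocal' hcase
    have hUz₀ : m / 2 < U z₀ := by
      have h1 : m₁ ≤ U z₀ + Λ z₀ := by
        have : G z₀ = U z₀ + Λ z₀ := max_eq_left hcase
        rw [← this]; exact hGval
      linarith
    have hVU : V z₀ ≤ U z₀ := by linarith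
    have hlap : lap U z₀ ≤ 0 := by
      have h := lap_nonpos_of_isLocalMax (hcdU.add hcdΛ) hmaxU
      rw [lap_add_s8 hcdU hcdΛ, lap_logabs hz₀ ε] at h
      linarith
    rw [heqU] at hlap
    have hexp : Real.exp (a * U z₀) ≤ Real.exp (V z₀ - U z₀) := by linarith
    have h2 := Real.exp_le_exp.1 hexp
    have h3 : 0 < a * U z₀ := mul_pos ha (by linarith)
    linarith
  · -- V branch
    have hlocal' : IsLocalMax (fun z => max (U z + Λ z) (V z + Λ z)) z₀ := hlocal
    have hmaxV : IsLocalMax (fun z => V z + Λ z) z₀ := isLocalMax_right_of_max hlocal' hcase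
    have hVz₀ : m / 2 < V z₀ := by
      have h1 : m₁ ≤ V z₀ + Λ z₀ := by
        have : G z₀ = V z₀ + Λ z₀ := max_eq_right hcase
        rw [← this]; exact hGval
      linarith
    have hUV : U z₀ ≤ V z₀ := by linarith
    have hlap : lap V z₀ ≤ 0 := by
      have h := lap_nonpos_of_isLocalMax (hcdV.add hcdΛ) hmaxV
      rw [lap_add_s8 hcdV hcdΛ, lap_logabs hz₀ ε] at h
      linarith
    rw [heqV] at hlap
    have hexp : Real.exp (V z₀ - U z₀) ≤ Real.exp (-(a * V z₀)) := by linarith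
    have h2 := Real.exp_le_exp.1 hexp
    have h3 : 0 < a * V z₀ := mul_pos ha (by linarith)
    linarith

end SignsA

section SignsB

private lemma lap_nonneg_of_isLocalMin {f : ℂ → ℝ} {z : ℂ}
    (hf : ContDiffAt ℝ 2 f z) (hmin : IsLocalMin f z) : 0 ≤ lap f z := by
  have h := lap_nonpos_of_isLocalMax hf.neg hmin.neg
  rw [lap_neg] at h
  linarith

private lemma deriv_nonneg_right {ψ : ℝ → ℝ} {L : ℝ} (h : HasDerivAt ψ L 0) (h0 : ψ 0 = 0)
    (hpos : ∀ᶠ t in nhdsWithin 0 (Set.Ioi (0:ℝ)), 0 ≤ ψ t) : 0 ≤ L := by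
  have hs : Tendsto (slope ψ 0) (nhdsWithin 0 (Set.Ioi 0)) (nhds L) :=
    (hasDerivAt_iff_tendsto_slope.1 h).mono_left (nhdsWithin_mono _ fun t ht => ne_of_gt ht)
  refine ge_of_tendsto hs ?_
  filter_upwards [hpos, self_mem_nhdsWithin] with t ht ht'
  rw [slope_def_field, h0, sub_zero, sub_zero]
  exact div_nonneg ht (le_of_lt ht')

private lemma exp_sub_one_le {t : ℝ} (ht : 0 ≤ t) {Bd : ℝ} (hB : t ≤ Bd) :
    Real.exp t - 1 ≤ t * Real.exp Bd := by
  have h1 : 1 - t ≤ Real.exp (-t) := by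
    have := Real.add_one_le_exp (-t); linarith
  have h2 : Real.exp t * (1 - t) ≤ 1 := by
    have := mul_le_mul_of_nonneg_left h1 (le_of_lt (Real.exp_pos t))
    rwa [← Real.exp_add, add_neg_cancel, Real.exp_zero] at this
  have h4 : Real.exp t ≤ Real.exp Bd := Real.exp_le_exp.2 hB
  nlinarith [Real.exp_pos t]

private lemma signs {a : ℝ} (ha : 0 < a) {U V : ℂ → ℝ} {γ : ℝ} (hγ : 0 < γ)
    (hsol : IsTodaSol a a U V)
    (hUi : TendstoZeroAtInfty U) (hVi : TendstoZeroAtInfty V)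
    (hU0 : LogAsymAtZero γ U) (hV0 : LogAsymAtZero 0 V) :
    ∀ z : ℂ, z ≠ 0 → U z < 0 ∧ V z < 0 := by
  have hA := signs_nonpos ha hγ hsol hUi hVi hU0 hV0
  set p : ℂ → ℝ := fun z => -(U z + V z) with hpdef
  have hp0 : ∀ z : ℂ, z ≠ 0 → 0 ≤ p z := by
    intro z hz
    have h := hA z hz
    show (0:ℝ) ≤ -(U z + V z)
    linarith [h.1, h.2]
  have hpcont : ContinuousOn p {(0:ℂ)}ᶜ :=
    ((smooth_cont hsol.1).add (smooth_cont hsol.2.1)).neg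
  have hpcd : ∀ {z : ℂ}, z ≠ 0 → ContDiffAt ℝ 2 p z := fun hz =>
    ((smooth_cd hsol.1 hz).add (smooth_cd hsol.2.1 hz)).neg
  have hlapp : ∀ z : ℂ, z ≠ 0 →
      lap p z = 4 * Real.exp (-(a * V z)) - 4 * Real.exp (a * U z) := by
    intro z hz
    obtain ⟨h1, h2⟩ := hsol.2.2 z hz
    have hneg : lap p z = -(lap (fun w => U w + V w) z) := lap_neg (fun w => U w + V w) z
    rw [hneg, lap_add_s8 (smooth_cd hsol.1 hz) (smooth_cd hsol.2.1 hz), h1, h2]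
    ring
  -- Hopf: the zero set of p is open
  have hSopen : IsOpen {z : ℂ | z ≠ 0 ∧ p z = 0} := by
    rw [Metric.isOpen_iff]
    rintro z₂ ⟨hz₂, hpz₂⟩
    have habs₂ : 0 < ‖z₂‖ := by simpa using hz₂
    set δ : ℝ := ‖z₂‖ / 2 with hδdef
    have hδ : 0 < δ := by positivity
    refine ⟨δ / 4, by positivity, ?_⟩
    have hcb : ∀ x ∈ Metric.closedBall z₂ δ, x ≠ 0 := by
      intro x hx h0
      have h1 : dist x z₂ ≤ δ := Metric.mem_closedBall.1 hx
      rw [h0] at h1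
      have h2 : dist (0:ℂ) z₂ = ‖z₂‖ := by
        rw [Complex.dist_eq]
        simp
      rw [h2, hδdef] at h1
      linarith
    have hcbC : IsCompact (Metric.closedBall z₂ δ) := isCompact_closedBall _ _
    have hcbsub : Metric.closedBall z₂ δ ⊆ {(0:ℂ)}ᶜ := fun x hx => hcb x hx
    have hVcont : ContinuousOn (fun x : ℂ => -(a * V x)) (Metric.closedBall z₂ δ) :=
      (continuousOn_const.mul ((smooth_cont hsol.2.1).mono hcbsub)).neg
    obtain ⟨xB, hxB, hxBmax⟩ := hcbC.exists_isMaxOn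
      ⟨z₂, Metric.mem_closedBall_self (le_of_lt hδ)⟩ hVcont
    set Bd : ℝ := -(a * V xB) with hBddef
    have hBd : ∀ x ∈ Metric.closedBall z₂ δ, -(a * V x) ≤ Bd := fun x hx => hxBmax hx
    set C : ℝ := 4 * (a * Real.exp Bd + a) + 1 with hCdef
    have hC : 0 < C := by positivity
    have hCp : ∀ x ∈ Metric.closedBall z₂ δ, lap p x ≤ C * p x := by
      intro x hx
      have hx0 := hcb x hx
      have hU' := (hA x hx0).1
      have hV' := (hA x hx0).2
      rw [hlapp x hx0]
      have h1 : Real.exp (-(a * V x)) - 1 ≤ (-(a * V x)) * Real.exp Bd :=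
        exp_sub_one_le (by nlinarith) (hBd x hx)
      have h2 : 1 - Real.exp (a * U x) ≤ -(a * U x) := by
        have := Real.add_one_le_exp (a * U x); linarith
      have hpx : p x = -(U x) + -(V x) := by
        show -(U x + V x) = _; ring
      have hEB : 0 < Real.exp Bd := Real.exp_pos _
      rw [hpx]
      have hCval : C = 4 * (a * Real.exp Bd + a) + 1 := hCdef
      nlinarith [mul_nonneg (le_of_lt ha) (neg_nonneg.2 hU'),
        mul_nonneg (le_of_lt ha) (neg_nonneg.2 hV'),
        mul_nonneg (mul_nonneg (le_of_lt ha) (neg_nonneg.2 hU')) (le_of_lt hEB),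
        mul_nonneg (mul_nonneg (le_of_lt ha) (neg_nonneg.2 hV')) (le_of_lt hEB)]
    intro w hw
    have hwz₂ : dist w z₂ < δ / 4 := Metric.mem_ball.1 hw
    have hwcb : w ∈ Metric.closedBall z₂ δ := by
      rw [Metric.mem_closedBall]; linarith [dist_nonneg (x := w) (y := z₂)]
    have hw0 : w ≠ 0 := hcb w hwcb
    refine ⟨hw0, ?_⟩
    by_contra hpw
    have hpwpos : 0 < p w := lt_of_le_of_ne (hp0 w hw0) (Ne.symm hpw)
    set Z' : Set ℂ := Metric.closedBall z₂ δ ∩ p ⁻¹' {0} with hZ'def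
    have hZ'closed : IsClosed Z' :=
      (hpcont.mono hcbsub).preimage_isClosed_of_isClosed Metric.isClosed_closedBall isClosed_singleton
    have hZ'cpt : IsCompact Z' := Metric.isCompact_of_isClosed_isBounded hZ'closed
      ((Metric.isBounded_closedBall (x := z₂) (r := δ)).subset Set.inter_subset_left)
    have hz₂Z' : z₂ ∈ Z' := ⟨Metric.mem_closedBall_self (le_of_lt hδ), by
      simpa using hpz₂⟩
    have hwnot : w ∉ Z' := fun h => hpw (by simpa using h.2)
    have hρpos : 0 < Metric.infDist w Z' :=
      (hZ'closed.notMem_iff_infDist_pos ⟨z₂, hz₂Z'⟩).1 hwnot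
    set ρ : ℝ := Metric.infDist w Z' with hρdef
    have hρle : ρ ≤ dist w z₂ := Metric.infDist_le_dist_of_mem hz₂Z'
    have hρδ : ρ < δ / 4 := lt_of_le_of_lt hρle hwz₂
    obtain ⟨q, hqZ', hqdist⟩ := hZ'cpt.exists_infDist_eq_dist ⟨z₂, hz₂Z'⟩ w
    have hdistwq : dist w q = ρ := hqdist.symm
    have hpq : p q = 0 := by simpa using hqZ'.2
    have hqcb : q ∈ Metric.closedBall z₂ δ := hqZ'.1
    have hq0 : q ≠ 0 := hcb q hqcb
    have hball_cb : ∀ x ∈ Metric.closedBall w ρ, x ∈ Metric.closedBall z₂ δ := by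
      intro x hx
      have h1 := Metric.mem_closedBall.1 hx
      rw [Metric.mem_closedBall]
      calc dist x z₂ ≤ dist x w + dist w z₂ := dist_triangle _ _ _
        _ ≤ ρ + δ / 4 := by linarith
        _ ≤ δ := by linarith
    have hppos : ∀ x ∈ Metric.ball w ρ, 0 < p x := by
      intro x hx
      have hxcb : x ∈ Metric.closedBall z₂ δ := hball_cb x (Metric.ball_subset_closedBall hx)
      have hx0 := hcb x hxcb
      rcases lt_or_eq_of_le (hp0 x hx0) with h | h
      · exact h
      · exfalso
        have hxZ' : x ∈ Z' := ⟨hxcb, by simp [← h]⟩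
        have h1 := Metric.infDist_le_dist_of_mem (x := w) hxZ'
        have h2 : dist x w < ρ := Metric.mem_ball.1 hx
        rw [dist_comm] at h2
        rw [← hρdef] at h1
        linarith
    set Ann : Set ℂ := (fun x : ℂ => dist x w) ⁻¹' Set.Icc (ρ/2) ρ with hAnndef
    have hAnnmem : ∀ x : ℂ, x ∈ Ann ↔ ρ/2 ≤ dist x w ∧ dist x w ≤ ρ := fun x => Iff.rfl
    have hAnnsub : Ann ⊆ Metric.closedBall z₂ δ := by
      intro x hx
      exact hball_cb x (Metric.mem_closedBall.2 ((hAnnmem x).1 hx).2)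
    have hAnn0 : ∀ x ∈ Ann, x ≠ 0 := fun x hx => hcb x (hAnnsub hx)
    have hAnncl : IsClosed Ann :=
      IsClosed.preimage (Continuous.dist continuous_id continuous_const) isClosed_Icc
    have hAnncpt : IsCompact Ann := Metric.isCompact_of_isClosed_isBounded hAnncl
      ((Metric.isBounded_closedBall (x := w) (r := ρ)).subset
        (fun x hx => Metric.mem_closedBall.2 ((hAnnmem x).1 hx).2))
    have hqAnn : q ∈ Ann := by
      rw [hAnnmem, dist_comm, hdistwq]
      exact ⟨by linarith, le_refl ρ⟩
    -- barrier parameters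
    set α : ℝ := max 1 ((5 + C) / ρ ^ 2) with hαdef
    have hα1 : 1 ≤ α := le_max_left _ _
    have hα0 : 0 < α := lt_of_lt_of_le one_pos hα1
    have hαρ : 5 + C ≤ α * ρ ^ 2 := by
      have h1 : (5 + C) / ρ ^ 2 ≤ α := le_max_right _ _
      calc 5 + C = ((5 + C) / ρ ^ 2) * ρ ^ 2 := by field_simp
        _ ≤ α * ρ ^ 2 := mul_le_mul_of_nonneg_right h1 (by positivity)
    have hnormSq_dist : ∀ x : ℂ, Complex.normSq (x - w) = dist x w ^ 2 := by
      intro x; rw [Complex.dist_eq, Complex.sq_norm]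
    set gs : ℂ → ℝ := fun x => Real.exp (-(α * Complex.normSq (x - w))) with hgsdef
    set hbar : ℂ → ℝ := fun x => gs x - Real.exp (-(α * ρ ^ 2)) with hhbardef
    have hbarcont : Continuous hbar := by
      have hgs : Continuous gs :=
        Real.continuous_exp.comp
          ((continuous_const.mul (contDiff_normSq.continuous.comp
            (continuous_id.sub continuous_const))).neg)
      exact hgs.sub continuous_const
    have hcdhbar : ∀ x : ℂ, ContDiffAt ℝ 2 hbar x := fun x =>
      (contDiffAt_gauss α w x).sub contDiffAt_const
    set h₀ : ℝ := Real.exp (-(α * (ρ / 2) ^ 2)) - Real.exp (-(α * ρ ^ 2)) with hh₀def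
    have hh₀ : 0 < h₀ := by
      rw [hh₀def, sub_pos]
      apply Real.exp_lt_exp.2
      nlinarith
    have hlapbar : ∀ x : ℂ, lap hbar x
        = (4 * α ^ 2 * Complex.normSq (x - w) - 4 * α)
            * Real.exp (-(α * Complex.normSq (x - w))) := by
      intro x
      have hstep : lap hbar x = lap gs x - lap (fun _ : ℂ => Real.exp (-(α * ρ ^ 2))) x :=
        lap_sub_s8 (contDiffAt_gauss α w x) contDiffAt_const
      rw [hstep, lap_const, lap_gauss α w x]
      ring
    have hbarlap : ∀ x ∈ Ann, C * hbar x < lap hbar x := by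
      intro x hx
      obtain ⟨hx1, hx2⟩ := (hAnnmem x).1 hx
      have hn1 : ρ ^ 2 / 4 ≤ Complex.normSq (x - w) := by
        rw [hnormSq_dist]
        nlinarith [dist_nonneg (x := x) (y := w)]
      have hn2 : Complex.normSq (x - w) ≤ ρ ^ 2 := by
        rw [hnormSq_dist]
        nlinarith [dist_nonneg (x := x) (y := w)]
      have hE : 0 < Real.exp (-(α * Complex.normSq (x - w))) := Real.exp_pos _
      have hbarx : hbar x ≤ Real.exp (-(α * Complex.normSq (x - w))) := by
        show gs x - Real.exp (-(α * ρ ^ 2)) ≤ _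
        have h2 : 0 < Real.exp (-(α * ρ ^ 2)) := Real.exp_pos _
        show Real.exp (-(α * Complex.normSq (x - w))) - Real.exp (-(α * ρ ^ 2)) ≤ _
        linarith
      have e1 : α * (5 + C) ≤ α * (α * ρ ^ 2) := mul_le_mul_of_nonneg_left hαρ (le_of_lt hα0)
      have e2 : α ^ 2 * (ρ ^ 2 / 4) ≤ α ^ 2 * Complex.normSq (x - w) :=
        mul_le_mul_of_nonneg_left hn1 (by positivity)
      have e3 : α * (α * ρ ^ 2) = α ^ 2 * ρ ^ 2 := by ring
      have e4 : C ≤ α * C := le_mul_of_one_le_left (le_of_lt hC) hα1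
      have e6 : α * (5 + C) = 5 * α + α * C := by ring
      have hcoef : C + 1 ≤ 4 * α ^ 2 * Complex.normSq (x - w) - 4 * α := by linarith
      rw [hlapbar x]
      have h7 : C * hbar x ≤ C * Real.exp (-(α * Complex.normSq (x - w))) :=
        mul_le_mul_of_nonneg_left hbarx (le_of_lt hC)
      have h8 : (C + 1) * Real.exp (-(α * Complex.normSq (x - w)))
          ≤ (4 * α ^ 2 * Complex.normSq (x - w) - 4 * α)
              * Real.exp (-(α * Complex.normSq (x - w))) :=
        mul_le_mul_of_nonneg_right hcoef (le_of_lt hE)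
      have h9 : C * Real.exp (-(α * Complex.normSq (x - w)))
          < (C + 1) * Real.exp (-(α * Complex.normSq (x - w))) :=
        mul_lt_mul_of_pos_right (lt_add_one C) hE
      linarith
    -- inner sphere minimum
    set Si : Set ℂ := Metric.sphere w (ρ / 2) with hSidef
    have hSicpt : IsCompact Si := isCompact_sphere _ _
    have hSine : Si.Nonempty := NormedSpace.sphere_nonempty.2 (by positivity)
    have hSisub_ball : Si ⊆ Metric.ball w ρ := by
      intro x hx
      have h1 : dist x w = ρ / 2 := Metric.mem_sphere.1 hx
      rw [Metric.mem_ball, h1]; linarith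
    have hSisub : Si ⊆ {(0:ℂ)}ᶜ := fun x hx =>
      hcb x (hball_cb x (Metric.ball_subset_closedBall (hSisub_ball hx)))
    obtain ⟨xμ, hxμ, hxμmin⟩ := hSicpt.exists_isMinOn hSine (hpcont.mono hSisub)
    set μ : ℝ := p xμ with hμdef
    have hμpos : 0 < μ := hppos xμ (hSisub_ball hxμ)
    set ε : ℝ := μ / h₀ with hεdef
    have hε : 0 < ε := by positivity
    set φ : ℂ → ℝ := fun x => p x - ε * hbar x with hφdef
    have hφAnn : ∀ x ∈ Ann, 0 ≤ φ x := by
      by_contra hco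
      push_neg at hco
      obtain ⟨x₃', hx₃', hφx₃'⟩ := hco
      have hφc : ContinuousOn φ Ann :=
        (hpcont.mono (fun x hx => hAnn0 x hx)).sub
          (continuousOn_const.mul hbarcont.continuousOn)
      obtain ⟨x₃, hx₃Ann, hx₃min⟩ := hAnncpt.exists_isMinOn ⟨x₃', hx₃'⟩ hφc
      have hφx₃ : φ x₃ < 0 := lt_of_le_of_lt (hx₃min hx₃') hφx₃'
      have hx₃0 : x₃ ≠ 0 := hAnn0 _ hx₃Ann
      obtain ⟨hx₃1, hx₃2⟩ := (hAnnmem x₃).1 hx₃Ann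
      have houter : dist x₃ w ≠ ρ := by
        intro h
        have hbar0 : hbar x₃ = 0 := by
          show Real.exp (-(α * Complex.normSq (x₃ - w))) - Real.exp (-(α * ρ ^ 2)) = 0
          rw [hnormSq_dist, h, sub_self]
        have heq : φ x₃ = p x₃ := by
          show p x₃ - ε * hbar x₃ = p x₃
          rw [hbar0]; ring
        rw [heq] at hφx₃
        exact absurd hφx₃ (not_lt.2 (hp0 x₃ hx₃0))
      have hinner : dist x₃ w ≠ ρ / 2 := by
        intro h
        have hx₃Si : x₃ ∈ Si := Metric.mem_sphere.2 h
        have hpx₃ : μ ≤ p x₃ := hxμmin hx₃Si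
        have hbarval : hbar x₃ = h₀ := by
          show Real.exp (-(α * Complex.normSq (x₃ - w))) - Real.exp (-(α * ρ ^ 2)) = h₀
          rw [hnormSq_dist, h, hh₀def]
        have heq : φ x₃ = p x₃ - ε * h₀ := by
          show p x₃ - ε * hbar x₃ = _
          rw [hbarval]
        have hεh₀ : ε * h₀ = μ := by
          rw [hεdef]; field_simp
        rw [heq, hεh₀] at hφx₃
        linarith
      have hx₃in : ρ / 2 < dist x₃ w ∧ dist x₃ w < ρ :=
        ⟨lt_of_le_of_ne hx₃1 (Ne.symm hinner), lt_of_le_of_ne hx₃2 houter⟩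
      have hOop : IsOpen ((fun x : ℂ => dist x w) ⁻¹' Set.Ioo (ρ/2) ρ) :=
        IsOpen.preimage (Continuous.dist continuous_id continuous_const) isOpen_Ioo
      have hlocmin : IsLocalMin φ x₃ := by
        filter_upwards [hOop.mem_nhds hx₃in] with x hx
        exact hx₃min ⟨le_of_lt hx.1, le_of_lt hx.2⟩
      have hcdφ : ContDiffAt ℝ 2 φ x₃ :=
        (hpcd hx₃0).sub (contDiffAt_const.mul (hcdhbar x₃))
      have h0lap : 0 ≤ lap φ x₃ := lap_nonneg_of_isLocalMin hcdφ hlocmin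
      have hlapφ : lap φ x₃ = lap p x₃ - ε * lap hbar x₃ := by
        have h1 : lap φ x₃ = lap p x₃ - lap (fun x => ε * hbar x) x₃ :=
          lap_sub_s8 (hpcd hx₃0) (contDiffAt_const.mul (hcdhbar x₃))
        rw [h1, lap_const_mul (hcdhbar x₃) ε]
      have hpb := hCp x₃ (hAnnsub hx₃Ann)
      have hbb := hbarlap x₃ hx₃Ann
      have hpε : p x₃ < ε * hbar x₃ := by
        have heq : φ x₃ = p x₃ - ε * hbar x₃ := rfl
        rw [heq] at hφx₃
        linarith
      have hmul1 : C * p x₃ < C * (ε * hbar x₃) := mul_lt_mul_of_pos_left hpε hC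
      have hmul2 : ε * (C * hbar x₃) ≤ ε * lap hbar x₃ :=
        mul_le_mul_of_nonneg_left (le_of_lt hbb) (le_of_lt hε)
      rw [hlapφ] at h0lap
      nlinarith
    -- the Hopf boundary point contradiction
    set dv : ℂ := w - q with hdvdef
    have hnormdv : Complex.normSq (q - w) = ρ ^ 2 := by
      rw [hnormSq_dist, dist_comm, hdistwq]
    have hnormdv' : Complex.normSq dv = ρ ^ 2 := by
      have h : dv = -(q - w) := by rw [hdvdef]; ring
      rw [h, Complex.normSq_neg, hnormdv]
    have hline_mem : ∀ t ∈ Set.Ioo (0:ℝ) (1/2), (q + t • dv) ∈ Ann := by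
      intro t ht
      have hvec : q + t • dv - w = (1 - t) • (q - w) := by
        rw [hdvdef]
        simp only [Complex.real_smul]
        push_cast
        ring
      have hdist : dist (q + t • dv) w = (1 - t) * ρ := by
        rw [Complex.dist_eq, hvec, Complex.real_smul, norm_mul, Complex.norm_real, Real.norm_eq_abs,
          abs_of_nonneg (by linarith [ht.2] : (0:ℝ) ≤ 1 - t)]
        rw [← Complex.dist_eq, dist_comm, hdistwq]
      rw [hAnnmem, hdist]
      constructor
      · nlinarith [ht.1, ht.2, hρpos]
      · nlinarith [ht.1, hρpos]
    set ψ : ℝ → ℝ := fun t => φ (q + t • dv) with hψdef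
    have hψ0 : ψ 0 = 0 := by
      show φ (q + (0:ℝ) • dv) = 0
      rw [zero_smul, add_zero]
      show p q - ε * hbar q = 0
      have hbq : hbar q = 0 := by
        show Real.exp (-(α * Complex.normSq (q - w))) - Real.exp (-(α * ρ ^ 2)) = 0
        rw [hnormdv, sub_self]
      rw [hpq, hbq]; ring
    have hψpos : ∀ᶠ t in nhdsWithin 0 (Set.Ioi (0:ℝ)), 0 ≤ ψ t := by
      have hIoo : Set.Ioo (0:ℝ) (1/2) ∈ nhdsWithin 0 (Set.Ioi (0:ℝ)) :=
        Ioo_mem_nhdsGT_of_mem ⟨le_refl 0, by norm_num⟩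
      filter_upwards [hIoo] with t ht
      exact hφAnn _ (hline_mem t ht)
    have hqdiff : DifferentiableAt ℝ p q := (hpcd hq0).differentiableAt (by decide)
    have hpline : HasDerivAt (fun t : ℝ => p (q + t • dv))
        (fderiv ℝ p (q + (0:ℝ) • dv) dv) 0 :=
      hasDerivAt_line p q dv 0 (by simpa using hqdiff)
    have hplocmin : IsLocalMin (fun t : ℝ => p (q + t • dv)) 0 := by
      have hcontline : Continuous (fun t : ℝ => q + t • dv) :=
        continuous_const.add (continuous_id.smul continuous_const)
      have htend : Tendsto (fun t : ℝ => q + t • dv) (nhds 0) (nhds q) := by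
        simpa using hcontline.tendsto 0
      have hev : ∀ᶠ t : ℝ in nhds 0, q + t • dv ∈ ({(0:ℂ)}ᶜ : Set ℂ) :=
        htend.eventually (isOpen_compl_singleton.eventually_mem hq0)
      filter_upwards [hev] with t ht
      show (fun t : ℝ => p (q + t • dv)) 0 ≤ p (q + t • dv)
      have h00 : (fun t : ℝ => p (q + t • dv)) 0 = p q := by
        simp only [zero_smul, add_zero]
      rw [h00, hpq]
      exact hp0 _ ht
    have hfderiv0 : fderiv ℝ p (q + (0:ℝ) • dv) dv = 0 := by
      rw [← hpline.deriv]
      exact hplocmin.deriv_eq_zero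
    have hBval : (q - w).re * dv.re + (q - w).im * dv.im = -(ρ ^ 2) := by
      have h : dv = -(q - w) := by rw [hdvdef]; ring
      rw [h, Complex.neg_re, Complex.neg_im]
      have h2 := hnormdv
      rw [Complex.normSq_apply] at h2
      linarith [h2]
    have hbline : HasDerivAt (fun t : ℝ => hbar (q + t • dv))
        (2 * α * ρ ^ 2 * Real.exp (-(α * ρ ^ 2))) 0 := by
      have hfun : (fun t : ℝ => hbar (q + t • dv))
          = fun t : ℝ => Real.exp (-(α * (ρ ^ 2
              + (2 * ((q - w).re * dv.re + (q - w).im * dv.im)) * t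
              + Complex.normSq dv * t ^ 2))) - Real.exp (-(α * ρ ^ 2)) := by
        funext t
        show Real.exp (-(α * Complex.normSq (q + t • dv - w))) - _ = _
        rw [show q + t • dv - w = (q - w) + t • dv by ring, normSq_line, hnormdv]
      rw [hfun]
      have h1 := (exp_quad_deriv1 α (ρ ^ 2)
        (2 * ((q - w).re * dv.re + (q - w).im * dv.im)) (Complex.normSq dv)).sub_const
        (Real.exp (-(α * ρ ^ 2)))
      refine h1.congr_deriv ?_
      rw [hBval]; ring
    have hψd : HasDerivAt ψ (fderiv ℝ p (q + (0:ℝ) • dv) dv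
        - ε * (2 * α * ρ ^ 2 * Real.exp (-(α * ρ ^ 2)))) 0 :=
      hpline.sub (hbline.const_mul ε)
    have hfinal := deriv_nonneg_right hψd hψ0 hψpos
    rw [hfderiv0] at hfinal
    have hposval : 0 < ε * (2 * α * ρ ^ 2 * Real.exp (-(α * ρ ^ 2))) := by positivity
    linarith
  -- conclusion from connectedness
  intro z hz
  by_contra hcon
  have hpz : p z = 0 := by
    rcases not_and_or.1 hcon with h | h
    · have hUz : U z = 0 := le_antisymm (hA z hz).1 (not_lt.1 h)
      have hmaxU : IsLocalMax U z := by
        filter_upwards [isOpen_compl_singleton.mem_nhds hz] with x hx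
        rw [hUz]; exact (hA x hx).1
      have hlap := lap_nonpos_of_isLocalMax (smooth_cd hsol.1 hz) hmaxU
      obtain ⟨h1, h2⟩ := hsol.2.2 z hz
      rw [h1] at hlap
      have hexp : Real.exp (a * U z) ≤ Real.exp (V z - U z) := by linarith
      have h3 := Real.exp_le_exp.1 hexp
      rw [hUz] at h3
      have hVz : V z = 0 := le_antisymm (hA z hz).2 (by simpa using h3)
      show -(U z + V z) = 0
      rw [hUz, hVz]; ring
    · have hVz : V z = 0 := le_antisymm (hA z hz).2 (not_lt.1 h)
      have hmaxV : IsLocalMax V z := by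
        filter_upwards [isOpen_compl_singleton.mem_nhds hz] with x hx
        rw [hVz]; exact (hA x hx).2
      have hlap := lap_nonpos_of_isLocalMax (smooth_cd hsol.2.1 hz) hmaxV
      obtain ⟨h1, h2⟩ := hsol.2.2 z hz
      rw [h2] at hlap
      have hexp : Real.exp (V z - U z) ≤ Real.exp (-(a * V z)) := by linarith
      have h3 := Real.exp_le_exp.1 hexp
      rw [hVz] at h3
      have hUz : U z = 0 := le_antisymm (hA z hz).1 (by simpa using h3)
      show -(U z + V z) = 0
      rw [hUz, hVz]; ring
  have hconn : IsPreconnected ({(0:ℂ)}ᶜ : Set ℂ) :=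
    (isConnected_compl_singleton_of_one_lt_rank
      (by rw [Complex.rank_real_complex]; norm_num) (0:ℂ)).isPreconnected
  have hTopen : IsOpen (({(0:ℂ)}ᶜ : Set ℂ) ∩ p ⁻¹' ({(0:ℝ)}ᶜ : Set ℝ)) :=
    hpcont.isOpen_inter_preimage isOpen_compl_singleton isOpen_compl_singleton
  have hcover : ({(0:ℂ)}ᶜ : Set ℂ) ⊆ {x : ℂ | x ≠ 0 ∧ p x = 0}
      ∪ (({(0:ℂ)}ᶜ : Set ℂ) ∩ p ⁻¹' ({(0:ℝ)}ᶜ : Set ℝ)) := by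
    intro x hx
    rcases eq_or_ne (p x) 0 with h | h
    · exact Or.inl ⟨hx, h⟩
    · exact Or.inr ⟨hx, h⟩
  rcases Set.eq_empty_or_nonempty
      (({(0:ℂ)}ᶜ : Set ℂ) ∩ (({(0:ℂ)}ᶜ : Set ℂ) ∩ p ⁻¹' ({(0:ℝ)}ᶜ : Set ℝ))) with hT | hT
  · -- p vanishes identically, contradicting the logarithmic asymptotics of U
    have hU_eq : ∀ x : ℂ, x ≠ 0 → U x = 0 := by
      intro x hx
      have hpx : p x = 0 := by
        by_contra hne
        exact Set.eq_empty_iff_forall_notMem.1 hT x ⟨hx, hx, hne⟩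
      have h1 := (hA x hx).1
      have h2 := (hA x hx).2
      have h3 : -(U x + V x) = 0 := hpx
      linarith
    have hzero : Tendsto (fun z : ℂ => U z / Real.log (‖z‖))
        (nhdsWithin 0 {(0:ℂ)}ᶜ) (nhds 0) := by
      have hev : (fun z : ℂ => U z / Real.log (‖z‖))
          =ᶠ[nhdsWithin 0 {(0:ℂ)}ᶜ] fun _ => (0:ℝ) := by
        filter_upwards [self_mem_nhdsWithin] with x hx
        rw [hU_eq x hx, zero_div]
      exact Tendsto.congr' hev.symm tendsto_const_nhds
    have : γ = 0 := tendsto_nhds_unique hU0 hzero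
    linarith
  · obtain ⟨x, hx1, hx2, hx3⟩ := hconn _ _ hSopen hTopen hcover ⟨z, hz, hz, hpz⟩ hT
    exact hx3.2 (by simpa using hx2.2)

end SignsB

section Final

private lemma toda_flip {a : ℝ} {u v : ℂ → ℝ} (h : IsTodaSol a a u v) :
    IsTodaSol a a (fun z => -(v z)) (fun z => -(u z)) := by
  obtain ⟨hu, hv, heq⟩ := h
  refine ⟨hv.neg, hu.neg, fun z hz => ?_⟩
  obtain ⟨h1, h2⟩ := heq z hz
  have lnv : lap (fun w => -(v w)) z = - lap v z := lap_neg v z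
  have lnu : lap (fun w => -(u w)) z = - lap u z := lap_neg u z
  constructor
  · show lap (fun w => -(v w)) z
      = 4 * (Real.exp (a * -(v z)) - Real.exp (-(u z) - -(v z)))
    rw [lnv, h2, show a * -(v z) = -(a * v z) by ring,
      show -(u z) - -(v z) = v z - u z by ring]
    ring
  · show lap (fun w => -(u w)) z
      = 4 * (Real.exp (-(u z) - -(v z)) - Real.exp (-(a * -(u z))))
    rw [lnu, h1, show -(u z) - -(v z) = v z - u z by ring,
      show -(a * -(u z)) = a * u z by ring]
    ring

private lemma tendstoZeroAtInfty_neg {f : ℂ → ℝ} (h : TendstoZeroAtInfty f) :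
    TendstoZeroAtInfty fun z => -(f z) := by
  unfold TendstoZeroAtInfty at *
  simpa using h.neg

private lemma logAsym_neg {f : ℂ → ℝ} {γ : ℝ} (h : LogAsymAtZero γ f) :
    LogAsymAtZero (-γ) fun z => -(f z) := by
  unfold LogAsymAtZero at *
  simpa [neg_div] using h.neg

end Final

/-- Mixed-sign case: any solution with data `(γ₀, γ₁)`, `γ₀ > 0 > γ₁`, is squeezed
between the solution `(ū, v̄)` with data `(γ̄₀, 0)` and the solution `(u*, v*)`
with data `(0, γ₁*)`. -/
theorem toda_mixed_sign_bounds (a γ₀ γ₁ γ₁star γ₀bar : ℝ) (ha : 0 < a)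
    (hγ₀ : 0 < γ₀) (hγ₀' : γ₀ < 2) (hγ₁ : -2 < γ₁) (hγ₁' : γ₁ < 0)
    (hdiff : γ₀ - γ₁ < 2)
    (hstar : -2 < γ₁star) (hstar' : γ₁star < γ₁)
    (hbar : γ₀ < γ₀bar) (hbar' : γ₀bar < 2)
    (ustar vstar : ℂ → ℝ) (hsolstar : IsTodaSol a a ustar vstar)
    (hasymstar : HasAsymData 0 γ₁star ustar vstar)
    (ubar vbar : ℂ → ℝ) (hsolbar : IsTodaSol a a ubar vbar)
    (hasymbar : HasAsymData γ₀bar 0 ubar vbar)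
    (u v : ℂ → ℝ) (hsol : IsTodaSol a a u v) (hasym : HasAsymData γ₀ γ₁ u v) :
    ∀ z : ℂ, z ≠ 0 →
      (ubar z < 0 ∧ 0 < ustar z ∧ vbar z < 0 ∧ 0 < vstar z) ∧
      (ubar z ≤ u z ∧ u z ≤ ustar z) ∧ (vbar z ≤ v z ∧ v z ≤ vstar z) := by
  obtain ⟨hui, hvi, hu0, hv0⟩ := hasym
  obtain ⟨husi, hvsi, hus0, hvs0⟩ := hasymstar
  obtain ⟨hubi, hvbi, hub0, hvb0⟩ := hasymbar
  have hbar_sign := signs ha (lt_trans hγ₀ hbar) hsolbar hubi hvbi hub0 hvb0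
  have hflip : IsTodaSol a a (fun z => -(vstar z)) (fun z => -(ustar z)) := toda_flip hsolstar
  have hvs0' : LogAsymAtZero (-γ₁star) fun z => -(vstar z) := logAsym_neg hvs0
  have hus0' : LogAsymAtZero 0 fun z => -(ustar z) := by
    have := logAsym_neg hus0
    simpa using this
  have hstar_sign := signs ha (γ := -γ₁star) (by linarith) hflip
    (tendstoZeroAtInfty_neg hvsi) (tendstoZeroAtInfty_neg husi) hvs0' hus0'
  have hsq1 := squeeze ha hsol hsolstar
    (diff_atBot hu0 hus0 (by linarith)) (diff_atBot hv0 hvs0 (by linarith))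
    hui husi hvi hvsi
  have hsq2 := squeeze ha hsolbar hsol
    (diff_atBot hub0 hu0 hbar) (diff_atBot hvb0 hv0 hγ₁')
    hubi hui hvbi hvi
  intro z hz
  have h1 := hbar_sign z hz
  have h2 := hstar_sign z hz
  have h2a : -(vstar z) < 0 := h2.1
  have h2b : -(ustar z) < 0 := h2.2
  exact ⟨⟨h1.1, by linarith, h1.2, by linarith⟩,
    ⟨(hsq2 z hz).1, (hsq1 z hz).1⟩, ⟨(hsq2 z hz).2, (hsq1 z hz).2⟩⟩
end Quad
end
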